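/- arXiv:2004.06533 — 5 statements merged into one kernel-verified Lean document; each statement's English description precedes it below -/
import Mathlib

section
/- Let (Ω, F, μ) be a probability space, p ∈ [0,1], and let Y, Z : Ω → ℝ be independent, identically distributed random variables with mean 0 and variance σ² (i.e. E[Y] = E[Z] = 0 and E[Y²] = E[Z²] = σ² < ∞). Let W : Ω → ℝ be a {0,1}-valued random variable with P(W = 1) = p that is independent of the pair (Y, Z), and define X := W·Z + (1 − W)·Y. Then for every Borel measurable function h : ℝ → ℝ such that h ∘ Z is square-integrable, E[(X − p·Z)²] ≤ E[(X − h(Z))²]; i.e. the estimator Ẑ = p·Z minimizes the mean squared error of estimating X among all square-integrable functions of Z. -/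
open MeasureTheory ProbabilityTheory

private lemma l2_mul_integrable {Ω : Type*} {F : MeasurableSpace Ω} {μ : Measure Ω}
    {f g : Ω → ℝ} (hf : MemLp f 2 μ) (hg : MemLp g 2 μ) :
    Integrable (fun ω => f ω * g ω) μ := by
  rw [← memLp_one_iff_integrable]
  have h1 : (1 : ENNReal) / 1 = 1 / 2 + 1 / 2 := by
    rw [ENNReal.div_add_div_same, one_add_one_eq_two,
      ENNReal.div_self (by norm_num) (by norm_num),
      ENNReal.div_self (by norm_num) (by norm_num)]
  haveI : ENNReal.HolderTriple 2 2 1 := ⟨by rw [ENNReal.inv_two_add_inv_two, inv_one]⟩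
  have := hg.smul hf (r := 1)
  exact this

/-- Optimality part of Lemma 5: if `X = Z` with probability `p` and `X = Y` (an independent
i.i.d. copy of `Z`) with probability `1 - p`, where the Bernoulli variable `W` is independent of
the pair `(Y, Z)`, then the estimator `p • Z` minimizes the mean squared error of estimating `X`
among all square-integrable Borel functions of `Z`. -/
theorem optimal_estimator_pZ
    {Ω : Type*} {F : MeasurableSpace Ω} (μ : Measure Ω) [IsProbabilityMeasure μ]
    (p σ2 : ℝ) (hp0 : 0 ≤ p) (hp1 : p ≤ 1)
    (Y Z W : Ω → ℝ)
    (hYm : Measurable Y) (hZm : Measurable Z) (hWm : Measurable W)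
    (hYZ_id : IdentDistrib Y Z μ μ)
    (hYZ_ind : IndepFun Y Z μ)
    (hY2 : MemLp Y 2 μ)
    (hYmean : ∫ ω, Y ω ∂μ = 0)
    (hYvar : ∫ ω, (Y ω) ^ 2 ∂μ = σ2)
    (hW01 : ∀ ω, W ω = 0 ∨ W ω = 1)
    (hWp : μ {ω | W ω = 1} = ENNReal.ofReal p)
    (hW_ind : IndepFun W (fun ω => (Y ω, Z ω)) μ)
    (h : ℝ → ℝ) (hh : Measurable h) (hhZ : MemLp (fun ω => h (Z ω)) 2 μ) :
    ∫ ω, ((W ω * Z ω + (1 - W ω) * Y ω) - p * Z ω) ^ 2 ∂μ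
      ≤ ∫ ω, ((W ω * Z ω + (1 - W ω) * Y ω) - h (Z ω)) ^ 2 ∂μ := by
  set X : Ω → ℝ := fun ω => W ω * Z ω + (1 - W ω) * Y ω with hX
  set G : Ω → ℝ := fun ω => p * Z ω - h (Z ω) with hG
  have hZ2 : MemLp Z 2 μ := hYZ_id.memLp_snd hY2
  -- W is bounded
  have hWb : ∀ ω, |W ω| ≤ 1 := by
    intro ω; rcases hW01 ω with h0 | h0 <;> simp [h0]
  have hWtop : MemLp W ⊤ μ :=
    memLp_top_of_bound hWm.aestronglyMeasurable 1 (Filter.Eventually.of_forall hWb)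
  have hWtop' : MemLp (fun ω => 1 - W ω) ⊤ μ :=
    (memLp_const (1 : ℝ)).sub hWtop
  have hWZ : MemLp (fun ω => W ω * Z ω) 2 μ := by
    exact hZ2.smul hWtop
  have hWY : MemLp (fun ω => (1 - W ω) * Y ω) 2 μ := by
    exact hY2.smul hWtop'
  have hX2 : MemLp X 2 μ := hWZ.add hWY
  have hpZ2 : MemLp (fun ω => p * Z ω) 2 μ := hZ2.const_mul p
  have hG2 : MemLp G 2 μ := hpZ2.sub hhZ
  have hXpZ2 : MemLp (fun ω => X ω - p * Z ω) 2 μ := hX2.sub hpZ2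
  -- measurability of G as a function of Z
  have hgm : Measurable (fun t : ℝ => p * t - h t) :=
    (measurable_const.mul measurable_id).sub hh
  -- integrability facts
  have hZG : Integrable (fun ω => Z ω * G ω) μ := l2_mul_integrable hZ2 hG2
  have hYG : Integrable (fun ω => Y ω * G ω) μ := l2_mul_integrable hY2 hG2
  -- E[W] = p
  have hEW : ∫ ω, W ω ∂μ = p := by
    have hset : MeasurableSet {ω | W ω = 1} := hWm (measurableSet_singleton 1)
    have : W = Set.indicator {ω | W ω = 1} (fun _ => (1 : ℝ)) := by
      funext ω
      rcases hW01 ω with h0 | h1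
      · simp [Set.indicator, h0]
      · simp [Set.indicator, h1]
    rw [this, integral_indicator_const _ hset, measureReal_def, hWp]
    simp [ENNReal.toReal_ofReal hp0]
  -- E[Y G(Z)] = 0
  have hEYG : ∫ ω, Y ω * G ω ∂μ = 0 := by
    have hind : IndepFun Y (fun ω => G ω) μ := hYZ_ind.comp measurable_id hgm
    rw [hind.integral_fun_mul_eq_mul_integral hYm.aestronglyMeasurable
      (hgm.comp hZm).aestronglyMeasurable, hYmean, zero_mul]
  -- E[W · Z G(Z)] = p E[Z G(Z)]
  have hEWZG : ∫ ω, W ω * (Z ω * G ω) ∂μ = p * ∫ ω, Z ω * G ω ∂μ := by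
    have hψ : Measurable (fun yz : ℝ × ℝ => yz.2 * (p * yz.2 - h yz.2)) :=
      measurable_snd.mul (hgm.comp measurable_snd)
    have hind : IndepFun W (fun ω => Z ω * G ω) μ := hW_ind.comp measurable_id hψ
    rw [hind.integral_fun_mul_eq_mul_integral hWm.aestronglyMeasurable
      (hZm.mul (hgm.comp hZm)).aestronglyMeasurable, hEW]
  -- E[(1-W) · Y G(Z)] = (1-p) · 0 = 0
  have hEWYG : ∫ ω, (1 - W ω) * (Y ω * G ω) ∂μ = 0 := by
    have hψ : Measurable (fun yz : ℝ × ℝ => yz.1 * (p * yz.2 - h yz.2)) :=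
      measurable_fst.mul (hgm.comp measurable_snd)
    have hind : IndepFun (fun ω => 1 - W ω) (fun ω => Y ω * G ω) μ :=
      hW_ind.comp (measurable_const.sub measurable_id) hψ
    rw [hind.integral_fun_mul_eq_mul_integral (measurable_const.sub hWm).aestronglyMeasurable
      (hYm.mul (hgm.comp hZm)).aestronglyMeasurable, hEYG, mul_zero]
  -- cross term vanishes
  have hcross : ∫ ω, (X ω - p * Z ω) * G ω ∂μ = 0 := by
    have heq : (fun ω => (X ω - p * Z ω) * G ω)
        = fun ω => W ω * (Z ω * G ω) + (1 - W ω) * (Y ω * G ω) - p * (Z ω * G ω) := by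
      funext ω; simp only [hX]; ring
    have hI1 : Integrable (fun ω => W ω * (Z ω * G ω)) μ :=
      hZG.bdd_mul (c := 1) hWm.aestronglyMeasurable (Filter.Eventually.of_forall fun ω => by simpa using hWb ω)
    have hI2 : Integrable (fun ω => (1 - W ω) * (Y ω * G ω)) μ := by
      refine hYG.bdd_mul (c := 2) (measurable_const.sub hWm).aestronglyMeasurable (Filter.Eventually.of_forall fun ω => ?_)
      have := hWb ω
      rw [Real.norm_eq_abs]
      cases abs_le.mp this with
      | intro h1 h2 => rw [abs_le]; constructor <;> linarith
    have hI12 : Integrable (fun ω => W ω * (Z ω * G ω) + (1 - W ω) * (Y ω * G ω)) μ :=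
      hI1.add hI2
    rw [heq, integral_sub hI12 (hZG.const_mul p), integral_add hI1 hI2,
      hEWZG, hEWYG, integral_const_mul]
    ring
  -- pointwise expansion
  have hpt : (fun ω => (X ω - h (Z ω)) ^ 2)
      = fun ω => (X ω - p * Z ω) ^ 2 + (2 * ((X ω - p * Z ω) * G ω) + G ω ^ 2) := by
    funext ω; simp only [hG]; ring
  have hIsq1 : Integrable (fun ω => (X ω - p * Z ω) ^ 2) μ := hXpZ2.integrable_sq
  have hIsq2 : Integrable (fun ω => G ω ^ 2) μ := hG2.integrable_sq
  have hIcross : Integrable (fun ω => (X ω - p * Z ω) * G ω) μ :=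
    l2_mul_integrable hXpZ2 hG2
  calc ∫ ω, (X ω - p * Z ω) ^ 2 ∂μ
      ≤ ∫ ω, (X ω - p * Z ω) ^ 2 ∂μ + (2 * 0 + ∫ ω, G ω ^ 2 ∂μ) := by
        have : 0 ≤ ∫ ω, G ω ^ 2 ∂μ := integral_nonneg fun ω => sq_nonneg _
        linarith
    _ = ∫ ω, (X ω - h (Z ω)) ^ 2 ∂μ := by
        have hIc2 : Integrable (fun ω => 2 * ((X ω - p * Z ω) * G ω)) μ :=
          hIcross.const_mul 2
        have hrest : Integrable (fun ω => 2 * ((X ω - p * Z ω) * G ω) + G ω ^ 2) μ :=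
          hIc2.add hIsq2
        rw [hpt, integral_add hIsq1 hrest, integral_add hIc2 hIsq2,
          integral_const_mul, hcross]
end

section
/- Let N ≥ 2 be an integer and λ_r > 0, λ_c > 0 reals, and set ρ̃ := λ_c/((N−1)·λ_r). Let C be the N×N real matrix with entries C_{k,k} = −k(N−k) and C_{k+1,k} = k(N−k) for 1 ≤ k ≤ N−1 and zeros elsewhere; let R be the N×N real matrix with entries R_{k,k} = −(k−1) and R_{k−1,k} = k−1 for 2 ≤ k ≤ N and zeros elsewhere; let A := λ_r·(ρ̃·C + R); let w ∈ ℝ^N have entries w_k = (k−1)/(N−1), let v ∈ ℝ^N have entries v_k = k(N−k)/(N−1), and let e₁ ∈ ℝ^N be the first standard basis vector. If the matrices 2λ_r·I − A and ρ̃⁻¹·(2I − R) − C are both invertible, then 1 − wᵀ·A·(2λ_r·I − A)⁻¹·e₁ = 1 − (vᵀ − ρ̃⁻¹·wᵀ)·(ρ̃⁻¹·(2I − R) − C)⁻¹·e₁. -/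
open Matrix

/-- Interaction part `C` of the decomposition `A = λ_r (ρ̃ C + R)` (1-indexed `k = i + 1`). -/
noncomputable def matC (N : ℕ) : Matrix (Fin N) (Fin N) ℝ :=
  Matrix.of fun i j =>
    if i = j then -(((i : ℕ) + 1 : ℝ) * ((N : ℝ) - ((i : ℕ) + 1 : ℝ)))
    else if (i : ℕ) = (j : ℕ) + 1 then ((j : ℕ) + 1 : ℝ) * ((N : ℝ) - ((j : ℕ) + 1 : ℝ))
    else 0

/-- Replacement part `R` of the decomposition `A = λ_r (ρ̃ C + R)` (1-indexed `k = i + 1`). -/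
noncomputable def matR (N : ℕ) : Matrix (Fin N) (Fin N) ℝ :=
  Matrix.of fun i j =>
    if i = j then -((i : ℕ) : ℝ)
    else if (j : ℕ) = (i : ℕ) + 1 then ((j : ℕ) : ℝ)
    else 0

lemma vecMul_matC (N : ℕ) (hN : 2 ≤ N) (w v : Fin N → ℝ)
    (hw : ∀ k : Fin N, w k = ((k : ℕ) : ℝ) / ((N : ℝ) - 1))
    (hv : ∀ k : Fin N, v k = ((k : ℕ) + 1 : ℝ) * ((N : ℝ) - ((k : ℕ) + 1 : ℝ)) / ((N : ℝ) - 1)) :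
    w ᵥ* matC N = v := by
  have hN1 : (N : ℝ) - 1 ≠ 0 := by
    have : (2 : ℝ) ≤ (N : ℝ) := by exact_mod_cast hN
    linarith
  funext j
  have hsplit : ∀ i : Fin N, w i * matC N i j =
      (if i = j then w j * (-(((j : ℕ) + 1 : ℝ) * ((N : ℝ) - ((j : ℕ) + 1 : ℝ)))) else 0) +
      (if (i : ℕ) = (j : ℕ) + 1 then w i * (((j : ℕ) + 1 : ℝ) * ((N : ℝ) - ((j : ℕ) + 1 : ℝ))) else 0) := by
    intro i
    rcases eq_or_ne i j with h | h
    · subst h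
      simp [matC]
    · have h2 : ((i : ℕ) = (j : ℕ) + 1) ∨ ¬ ((i : ℕ) = (j : ℕ) + 1) := em _
      simp only [matC, Matrix.of_apply, if_neg h]
      rcases h2 with h2 | h2
      · simp [h2]
      · simp [h2]
  show (∑ i, w i * matC N i j) = v j
  rw [Finset.sum_congr rfl (fun i _ => hsplit i), Finset.sum_add_distrib,
    Finset.sum_ite_eq' Finset.univ j, if_pos (Finset.mem_univ j)]
  by_cases hj : (j : ℕ) + 1 < N
  · have hsum2 : (∑ i : Fin N, if (i : ℕ) = (j : ℕ) + 1 then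
        w i * (((j : ℕ) + 1 : ℝ) * ((N : ℝ) - ((j : ℕ) + 1 : ℝ))) else 0)
        = w ⟨(j : ℕ) + 1, hj⟩ * (((j : ℕ) + 1 : ℝ) * ((N : ℝ) - ((j : ℕ) + 1 : ℝ))) := by
      rw [Finset.sum_eq_single (⟨(j : ℕ) + 1, hj⟩ : Fin N)]
      · simp
      · intro b _ hb
        have : ¬ ((b : ℕ) = (j : ℕ) + 1) := by
          intro hh; exact hb (Fin.ext hh)
        simp [this]
      · intro h; exact absurd (Finset.mem_univ _) h
    rw [hsum2, hw, hw, hv]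
    simp only [Fin.val_mk]
    push_cast
    field_simp
    ring
  · have hjN : ((j : ℕ) : ℝ) + 1 = (N : ℝ) := by
      have h1 : (j : ℕ) + 1 = N := le_antisymm j.isLt (not_lt.mp hj)
      exact_mod_cast h1
    have hsum2 : (∑ i : Fin N, if (i : ℕ) = (j : ℕ) + 1 then
        w i * (((j : ℕ) + 1 : ℝ) * ((N : ℝ) - ((j : ℕ) + 1 : ℝ))) else 0) = 0 := by
      apply Finset.sum_eq_zero
      intro i _
      have : ¬ ((i : ℕ) = (j : ℕ) + 1) := by
        intro hh
        exact absurd (hh ▸ i.isLt) hj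
      simp [this]
    rw [hsum2, hv]
    rw [show (N : ℝ) - (((j : ℕ) : ℝ) + 1) = 0 by linarith [hjN]]
    ring

lemma vecMul_matR (N : ℕ) (hN : 2 ≤ N) (w : Fin N → ℝ)
    (hw : ∀ k : Fin N, w k = ((k : ℕ) : ℝ) / ((N : ℝ) - 1)) :
    w ᵥ* matR N = -w := by
  have hN1 : (N : ℝ) - 1 ≠ 0 := by
    have : (2 : ℝ) ≤ (N : ℝ) := by exact_mod_cast hN
    linarith
  funext j
  have hsplit : ∀ i : Fin N, w i * matR N i j =
      (if i = j then w j * (-(((j : ℕ) : ℝ))) else 0) +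
      (if (j : ℕ) = (i : ℕ) + 1 then w i * ((j : ℕ) : ℝ) else 0) := by
    intro i
    rcases eq_or_ne i j with h | h
    · subst h
      have : ¬ ((i : ℕ) = (i : ℕ) + 1) := by omega
      simp [matR, this]
    · have h2 : ((j : ℕ) = (i : ℕ) + 1) ∨ ¬ ((j : ℕ) = (i : ℕ) + 1) := em _
      simp only [matR, Matrix.of_apply, if_neg h]
      rcases h2 with h2 | h2
      · simp [h2]
      · simp [h2]
  show (∑ i, w i * matR N i j) = -w j
  rw [Finset.sum_congr rfl (fun i _ => hsplit i), Finset.sum_add_distrib,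
    Finset.sum_ite_eq' Finset.univ j, if_pos (Finset.mem_univ j)]
  by_cases hj : 0 < (j : ℕ)
  · have hlt : (j : ℕ) - 1 < N := by omega
    have hsum2 : (∑ i : Fin N, if (j : ℕ) = (i : ℕ) + 1 then w i * ((j : ℕ) : ℝ) else 0)
        = w ⟨(j : ℕ) - 1, hlt⟩ * ((j : ℕ) : ℝ) := by
      rw [Finset.sum_eq_single (⟨(j : ℕ) - 1, hlt⟩ : Fin N)]
      · have h5 : (j : ℕ) = ((j : ℕ) - 1) + 1 := by omega
        simp only [Fin.val_mk]
        rw [if_pos h5]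
      · intro b _ hb
        have : ¬ ((j : ℕ) = (b : ℕ) + 1) := by
          intro hh
          apply hb
          apply Fin.ext
          simp
          omega
        simp [this]
      · intro h; exact absurd (Finset.mem_univ _) h
    rw [hsum2, hw, hw]
    simp only [Fin.val_mk]
    have hcast : (((j : ℕ) - 1 : ℕ) : ℝ) = ((j : ℕ) : ℝ) - 1 := by
      have : ((j : ℕ) - 1) + 1 = (j : ℕ) := by omega
      have := congrArg (fun n : ℕ => (n : ℝ)) this
      push_cast at this
      linarith
    rw [hcast]
    field_simp
    ring
  · have hj0 : (j : ℕ) = 0 := by omega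
    have hsum2 : (∑ i : Fin N, if (j : ℕ) = (i : ℕ) + 1 then w i * ((j : ℕ) : ℝ) else 0) = 0 := by
      apply Finset.sum_eq_zero
      intro i _
      have : ¬ ((j : ℕ) = (i : ℕ) + 1) := by omega
      simp [this]
    rw [hsum2, hw, hj0]
    simp

/-- Lemma 6 of the appendix: the asymptotic Gossip bound `1 - wᵀ A (2 λ_r I - A)⁻¹ e₁`
rewritten purely in terms of the rate ratio `ρ̃ = λ_c / ((N-1) λ_r)`. -/
theorem gossip_bound_rate_ratio_reformulation
    (N : ℕ) (hN : 2 ≤ N) (lr lc : ℝ) (hlr : 0 < lr) (hlc : 0 < lc)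
    (ρ : ℝ) (hρ : ρ = lc / (((N : ℝ) - 1) * lr))
    (A : Matrix (Fin N) (Fin N) ℝ) (hA : A = lr • (ρ • matC N + matR N))
    (w v e1 : Fin N → ℝ)
    (hw : ∀ k : Fin N, w k = ((k : ℕ) : ℝ) / ((N : ℝ) - 1))
    (hv : ∀ k : Fin N, v k = ((k : ℕ) + 1 : ℝ) * ((N : ℝ) - ((k : ℕ) + 1 : ℝ)) / ((N : ℝ) - 1))
    (he1 : ∀ j : Fin N, e1 j = if (j : ℕ) = 0 then 1 else 0)
    (hinv1 : IsUnit ((2 * lr) • (1 : Matrix (Fin N) (Fin N) ℝ) - A))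
    (hinv2 : IsUnit (ρ⁻¹ • ((2 : ℝ) • (1 : Matrix (Fin N) (Fin N) ℝ) - matR N) - matC N)) :
    1 - w ⬝ᵥ (A *ᵥ (((2 * lr) • (1 : Matrix (Fin N) (Fin N) ℝ) - A)⁻¹ *ᵥ e1))
      = 1 - (v - ρ⁻¹ • w) ⬝ᵥ
          ((ρ⁻¹ • ((2 : ℝ) • (1 : Matrix (Fin N) (Fin N) ℝ) - matR N) - matC N)⁻¹ *ᵥ e1) := by
  have hN1 : (0 : ℝ) < (N : ℝ) - 1 := by
    have : (2 : ℝ) ≤ (N : ℝ) := by exact_mod_cast hN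
    linarith
  have hρ0 : ρ ≠ 0 := by
    rw [hρ]
    positivity
  have hlrρ : lr * ρ ≠ 0 := mul_ne_zero (ne_of_gt hlr) hρ0
  set M : Matrix (Fin N) (Fin N) ℝ :=
    ρ⁻¹ • ((2 : ℝ) • (1 : Matrix (Fin N) (Fin N) ℝ) - matR N) - matC N with hM
  -- key matrix identity
  have key : (2 * lr) • (1 : Matrix (Fin N) (Fin N) ℝ) - A = (lr * ρ) • M := by
    rw [hA, hM]
    match_scalars <;> field_simp <;> ring
  -- inverse identity
  have hdetM : IsUnit M.det := (Matrix.isUnit_iff_isUnit_det M).mp hinv2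
  haveI : Invertible (lr * ρ) := invertibleOfNonzero hlrρ
  have hinvkey : ((2 * lr) • (1 : Matrix (Fin N) (Fin N) ℝ) - A)⁻¹ = (lr * ρ)⁻¹ • M⁻¹ := by
    rw [key, Matrix.inv_smul _ _ hdetM, invOf_eq_inv]
  -- vecMul computation
  have hwC := vecMul_matC N hN w v hw hv
  have hwR := vecMul_matR N hN w hw
  set y : Fin N → ℝ := M⁻¹ *ᵥ e1 with hy
  have hterm : w ⬝ᵥ (A *ᵥ (((2 * lr) • (1 : Matrix (Fin N) (Fin N) ℝ) - A)⁻¹ *ᵥ e1))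
      = (v - ρ⁻¹ • w) ⬝ᵥ y := by
    rw [hinvkey, Matrix.smul_mulVec, ← hy, Matrix.mulVec_smul, dotProduct_smul]
    have h1 : w ⬝ᵥ (A *ᵥ y) = lr * (ρ * (v ⬝ᵥ y) + (-w) ⬝ᵥ y) := by
      rw [hA, Matrix.smul_mulVec, dotProduct_smul, Matrix.add_mulVec,
        dotProduct_add, Matrix.smul_mulVec, dotProduct_smul,
        Matrix.dotProduct_mulVec w (matC N) y, hwC,
        Matrix.dotProduct_mulVec w (matR N) y, hwR]
      simp [smul_eq_mul]
    rw [h1, sub_dotProduct, smul_dotProduct, neg_dotProduct]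
    have hc1 : (lr * ρ)⁻¹ * (lr * ρ) = 1 := inv_mul_cancel₀ hlrρ
    have hc2 : (lr * ρ)⁻¹ * lr = ρ⁻¹ := by
      field_simp
    simp only [smul_eq_mul]
    field_simp
    ring
  rw [hterm]
end

section
/- Let N ≥ 2 be an integer. Let C be the N×N real matrix with entries C_{k,k} = −k(N−k) and C_{k+1,k} = k(N−k) for 1 ≤ k ≤ N−1 and zeros elsewhere, and let R be the N×N real matrix with entries R_{k,k} = −(k−1) and R_{k−1,k} = k−1 for 2 ≤ k ≤ N and zeros elsewhere. Consider the real function q(λ̃) := det(λ̃·(2I − R) − C). Then q(0) = 0 and the derivative of q at 0 equals 2(N−1)·∏_{j=1}^{N−2} j(N−j), which is strictly positive. Moreover, for every k with 1 ≤ k ≤ N−1, the determinant of the k×k leading principal submatrix of −C equals ∏_{j=1}^{k} j(N−j) ≠ 0. -/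
open Matrix Finset

/-- Determinant of the `k × k` upper-left (leading principal) submatrix of an `N × N` matrix;
by convention it is `1` for `k = 0` (empty matrix). -/
noncomputable def leadMinor {N : ℕ} (M : Matrix (Fin N) (Fin N) ℝ) (k : ℕ) : ℝ :=
  if h : k ≤ N then (M.submatrix (Fin.castLE h) (Fin.castLE h)).det else 0

lemma negC_diag (N : ℕ) (i : Fin N) :
    (-(matC N)) i i = ((i : ℕ) + 1 : ℝ) * ((N : ℝ) - ((i : ℕ) + 1 : ℝ)) := by
  simp [matC]

lemma negC_sub (N : ℕ) (i j : Fin N) (hij : (i : ℕ) = (j : ℕ) + 1) :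
    (-(matC N)) i j = -(((j : ℕ) + 1 : ℝ) * ((N : ℝ) - ((j : ℕ) + 1 : ℝ))) := by
  have hne : i ≠ j := by intro h; subst h; omega
  show -(matC N i j) = _
  rw [matC]
  simp only [Matrix.of_apply]
  rw [if_neg hne, if_pos hij]

lemma det_negC_sub (N k : ℕ) (r : Fin k → Fin N) (c : Fin k → Fin N)
    (hc : ∀ j, ((c j : ℕ)) = (j : ℕ))
    (hr : ∀ j₁ j₂ : Fin k, j₁ < j₂ → ((r j₁ : ℕ)) < (j₂ : ℕ)) :
    ((-(matC N)).submatrix r c).det = ∏ j : Fin k, (-(matC N)) (r j) (c j) := by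
  have htri : ((-(matC N)).submatrix r c).BlockTriangular OrderDual.toDual := by
    intro i j hij
    have hij' : i < j := hij
    have h1 : r i ≠ c j := by
      intro h
      have := hr i j hij'
      rw [h, hc j] at this
      exact lt_irrefl _ this
    have h2 : ¬ ((r i : ℕ)) = (c j : ℕ) + 1 := by
      have h3 := hr i j hij'
      have h4 := hc j
      omega
    show -(matC N (r i) (c j)) = 0
    rw [matC]
    simp only [Matrix.of_apply]
    rw [if_neg h1, if_neg h2, neg_zero]
  rw [Matrix.det_of_lowerTriangular _ htri]
  rfl

lemma prod_fin_to_Icc (N k : ℕ) :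
    (∏ i : Fin k, (((i : ℕ) + 1 : ℝ) * ((N : ℝ) - ((i : ℕ) + 1 : ℝ))))
      = ∏ j ∈ Finset.Icc 1 k, (j : ℝ) * ((N : ℝ) - (j : ℝ)) := by
  rw [Fin.prod_univ_eq_prod_range (fun a => ((a:ℝ)+1) * ((N:ℝ) - ((a:ℝ)+1))) k,
    ← Finset.Ico_add_one_right_eq_Icc, Finset.prod_Ico_eq_prod_range]
  refine Finset.prod_congr rfl fun i _ => ?_
  push_cast
  ring

/-- The determinant `q(λ̃) = det(λ̃ (2I - R) - C)` of the tridiagonal matrix of the rate-ratio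
reformulation vanishes at `λ̃ = 0` with strictly positive derivative
`2(N-1) ∏_{j=1}^{N-2} j(N-j)`, while all proper leading principal minors of `-C` are the
nonzero numbers `∏_{j=1}^{k} j(N-j)` (appendix, proof of Proposition 7). -/
theorem gossip_determinant_at_zero
    (N : ℕ) (hN : 2 ≤ N)
    (q : ℝ → ℝ)
    (hq : ∀ lam : ℝ,
      q lam = (lam • ((2 : ℝ) • (1 : Matrix (Fin N) (Fin N) ℝ) - matR N) - matC N).det) :
    q 0 = 0
      ∧ deriv q 0 = 2 * ((N : ℝ) - 1) * ∏ j ∈ Finset.Icc 1 (N - 2), (j : ℝ) * ((N : ℝ) - (j : ℝ))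
      ∧ 0 < 2 * ((N : ℝ) - 1) * ∏ j ∈ Finset.Icc 1 (N - 2), (j : ℝ) * ((N : ℝ) - (j : ℝ))
      ∧ ∀ k : ℕ, 1 ≤ k → k ≤ N - 1 →
          leadMinor (-(matC N)) k = ∏ j ∈ Finset.Icc 1 k, (j : ℝ) * ((N : ℝ) - (j : ℝ))
            ∧ (∏ j ∈ Finset.Icc 1 k, (j : ℝ) * ((N : ℝ) - (j : ℝ))) ≠ 0 := by
  obtain ⟨m, rfl⟩ : ∃ m, N = m + 2 := ⟨N - 2, by omega⟩
  set B : Matrix (Fin (m + 2)) (Fin (m + 2)) ℝ :=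
    (2 : ℝ) • (1 : Matrix (Fin (m + 2)) (Fin (m + 2)) ℝ) - matR (m + 2) with hB
  -- last column of matC is zero
  have hClast : ∀ i : Fin (m + 2), matC (m + 2) i (Fin.last (m + 1)) = 0 := by
    intro i
    rw [matC]
    simp only [Matrix.of_apply]
    by_cases h : i = Fin.last (m + 1)
    · rw [if_pos h, h]
      simp only [Fin.val_last]
      push_cast
      ring
    · rw [if_neg h, if_neg (by have := i.isLt; simp only [Fin.val_last]; omega)]
  -- M t
  set M : ℝ → Matrix (Fin (m + 2)) (Fin (m + 2)) ℝ := fun t => t • B - matC (m + 2) with hM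
  have hM0 : M 0 = -(matC (m + 2)) := by
    simp [hM, zero_smul, zero_sub]
  -- entries of last column of M t
  have hMlast : ∀ (t : ℝ) (i : Fin (m + 2)),
      M t i (Fin.last (m + 1)) = t * B i (Fin.last (m + 1)) := by
    intro t i
    simp only [hM, Matrix.sub_apply, Matrix.smul_apply, hClast i, smul_eq_mul, sub_zero]
  -- g
  set g : ℝ → ℝ := fun t => ∑ i : Fin (m + 2),
      (-1 : ℝ) ^ ((i : ℕ) + ((Fin.last (m + 1) : Fin (m + 2)) : ℕ)) * B i (Fin.last (m + 1)) *
        ((M t).submatrix i.succAbove (Fin.last (m + 1)).succAbove).det with hg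
  have hqt : ∀ t : ℝ, q t = t * g t := by
    intro t
    rw [hq t]
    show (M t).det = t * g t
    rw [Matrix.det_succ_column (M t) (Fin.last (m + 1)), hg, Finset.mul_sum]
    refine Finset.sum_congr rfl fun i _ => ?_
    rw [hMlast t i]
    ring
  -- q 0 = 0
  have hq0 : q 0 = 0 := by rw [hqt 0]; ring
  -- continuity of g
  have hMc : Continuous M := by
    apply Continuous.sub
    · exact continuous_id.smul continuous_const
    · exact continuous_const
  have hgc : Continuous g := by
    rw [hg]
    apply continuous_finset_sum
    intro i _
    exact continuous_const.mul ((hMc.matrix_submatrix _ _).matrix_det)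
  -- derivative
  have hder : HasDerivAt q (g 0) 0 := by
    rw [hasDerivAt_iff_tendsto_slope]
    have hev : (fun t => g t) =ᶠ[nhdsWithin 0 {(0:ℝ)}ᶜ] slope q 0 := by
      filter_upwards [self_mem_nhdsWithin] with t ht
      have ht' : t ≠ 0 := ht
      rw [slope_def_field, hq0, hqt t, sub_zero, sub_zero, mul_div_assoc]
      field_simp
    exact Filter.Tendsto.congr' hev
      (tendsto_nhdsWithin_of_tendsto_nhds (hgc.continuousAt.tendsto))
  -- the two special indices
  set i0 : Fin (m + 2) := ⟨m, by omega⟩ with hi0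
  have hi0ne : i0 ≠ Fin.last (m + 1) := by
    intro h
    have : (i0 : ℕ) = m + 1 := by rw [h]; rfl
    simp [hi0] at this
  -- values of B in the last column
  have hBlast : B (Fin.last (m + 1)) (Fin.last (m + 1)) = (m : ℝ) + 3 := by
    simp only [hB, Matrix.sub_apply, Matrix.smul_apply, Matrix.one_apply_eq, matR,
      Matrix.of_apply, if_pos rfl, Fin.val_last, smul_eq_mul]
    push_cast
    ring
  have hBi0 : B i0 (Fin.last (m + 1)) = -((m : ℝ) + 1) := by
    have h1 : ((Fin.last (m + 1) : Fin (m + 2)) : ℕ) = (i0 : ℕ) + 1 := by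
      simp [hi0]
    simp only [hB, Matrix.sub_apply, Matrix.smul_apply, Matrix.one_apply_ne hi0ne, matR,
      Matrix.of_apply, if_neg hi0ne, if_pos h1, smul_eq_mul, Fin.val_last]
    rw [if_pos (rfl : m + 1 = (i0 : ℕ) + 1)]
    push_cast
    ring
  have hBother : ∀ i : Fin (m + 2), i ≠ i0 → i ≠ Fin.last (m + 1) →
      B i (Fin.last (m + 1)) = 0 := by
    intro i h1 h2
    have hv1 : (i : ℕ) ≠ m := fun h => h1 (Fin.ext h)
    have hv2 : ((Fin.last (m + 1) : Fin (m + 2)) : ℕ) ≠ (i : ℕ) + 1 := by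
      simp only [Fin.val_last]; omega
    simp only [hB, Matrix.sub_apply, Matrix.smul_apply, Matrix.one_apply_ne h2, matR,
      Matrix.of_apply, if_neg h2, if_neg hv2, smul_eq_mul]
    ring
  -- compute g 0
  -- the two minors at t = 0
  have hD2 : ((M 0).submatrix (Fin.last (m + 1)).succAbove (Fin.last (m + 1)).succAbove).det
      = (∏ i : Fin m, (((i : ℕ) + 1 : ℝ) * (((m + 2 : ℕ) : ℝ) - ((i : ℕ) + 1 : ℝ)))) *
        (((m : ℝ) + 1) * (((m + 2 : ℕ) : ℝ) - ((m : ℝ) + 1))) := by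
    rw [hM0, Fin.succAbove_last,
      det_negC_sub (m + 2) (m + 1) Fin.castSucc Fin.castSucc (fun j => rfl)
        (fun j₁ j₂ h => h), Fin.prod_univ_castSucc]
    congr 1
    · refine Finset.prod_congr rfl fun jj _ => ?_
      rw [negC_diag]
      simp [Fin.coe_castSucc]
    · rw [negC_diag]
      simp only [Fin.coe_castSucc, Fin.val_last]
  have hr1 : ∀ j₁ j₂ : Fin (m + 1), j₁ < j₂ → ((i0.succAbove j₁ : ℕ)) < (j₂ : ℕ) := by
    intro j₁ j₂ h
    rcases lt_or_ge (Fin.castSucc j₁) i0 with hlt | hle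
    · rw [Fin.succAbove_of_castSucc_lt _ _ hlt]
      exact h
    · exfalso
      have h1 : m ≤ (j₁ : ℕ) := hle
      have h2 : (j₁ : ℕ) < (j₂ : ℕ) := h
      have h3 := j₂.isLt
      omega
  have hD1 : ((M 0).submatrix i0.succAbove (Fin.last (m + 1)).succAbove).det
      = (∏ i : Fin m, (((i : ℕ) + 1 : ℝ) * (((m + 2 : ℕ) : ℝ) - ((i : ℕ) + 1 : ℝ)))) *
        (-(((m : ℝ) + 1) * (((m + 2 : ℕ) : ℝ) - ((m : ℝ) + 1)))) := by
    rw [hM0, Fin.succAbove_last,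
      det_negC_sub (m + 2) (m + 1) i0.succAbove Fin.castSucc (fun j => rfl) hr1,
      Fin.prod_univ_castSucc]
    congr 1
    · refine Finset.prod_congr rfl fun jj _ => ?_
      have hlt : Fin.castSucc (Fin.castSucc jj) < i0 := by
        rw [Fin.lt_def]
        simp only [Fin.coe_castSucc]
        exact jj.isLt
      rw [Fin.succAbove_of_castSucc_lt _ _ hlt, negC_diag]
      simp [Fin.coe_castSucc]
    · have hle : i0 ≤ Fin.castSucc (Fin.last m) := by
        rw [Fin.le_def]
        simp [hi0]
      rw [Fin.succAbove_of_le_castSucc _ _ hle, negC_sub _ _ _ (by simp)]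
      simp only [Fin.coe_castSucc, Fin.val_last]
  -- reduce the sum defining g 0 to the two nonzero terms
  have hsum : g 0 = (-1 : ℝ) ^ ((i0 : ℕ) + (m + 1)) * B i0 (Fin.last (m + 1)) *
        ((M 0).submatrix i0.succAbove (Fin.last (m + 1)).succAbove).det
      + (-1 : ℝ) ^ ((m + 1) + (m + 1)) * B (Fin.last (m + 1)) (Fin.last (m + 1)) *
        ((M 0).submatrix (Fin.last (m + 1)).succAbove (Fin.last (m + 1)).succAbove).det := by
    have hrfl : g 0 = ∑ i : Fin (m + 2),
        (-1 : ℝ) ^ ((i : ℕ) + (m + 1)) * B i (Fin.last (m + 1)) *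
          ((M 0).submatrix i.succAbove (Fin.last (m + 1)).succAbove).det := rfl
    have hzero : ∀ x ∈ (univ : Finset (Fin (m + 2))),
        x ∉ ({i0, Fin.last (m + 1)} : Finset (Fin (m + 2))) →
        (-1 : ℝ) ^ ((x : ℕ) + (m + 1)) * B x (Fin.last (m + 1)) *
          ((M 0).submatrix x.succAbove (Fin.last (m + 1)).succAbove).det = 0 := by
      intro x _ hx
      simp only [Finset.mem_insert, Finset.mem_singleton, not_or] at hx
      rw [hBother x hx.1 hx.2]
      ring
    rw [hrfl, ← Finset.sum_subset (Finset.subset_univ _) hzero, Finset.sum_pair hi0ne]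
    rfl
  have hg0 : g 0 = 2 * ((m : ℝ) + 1) *
      ∏ i : Fin m, (((i : ℕ) + 1 : ℝ) * (((m + 2 : ℕ) : ℝ) - ((i : ℕ) + 1 : ℝ))) := by
    rw [hsum, hBi0, hBlast, hD1, hD2]
    rw [show ((i0 : ℕ)) = m from rfl]
    rw [Odd.neg_one_pow ⟨m, by ring⟩, Even.neg_one_pow ⟨m + 1, by ring⟩]
    push_cast
    ring
  have hderiv : deriv q 0 = g 0 := hder.deriv
  have hm2 : m + 2 - 2 = m := by omega
  refine ⟨hq0, ?_, ?_, ?_⟩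
  · rw [hderiv, hg0, hm2, ← prod_fin_to_Icc (m + 2) m]
    push_cast
    ring
  · rw [hm2]
    have h1 : (0 : ℝ) < 2 * (((m + 2 : ℕ) : ℝ) - 1) := by
      push_cast; linarith
    refine mul_pos h1 (Finset.prod_pos fun j hj => ?_)
    rw [Finset.mem_Icc] at hj
    have hj1 : (0 : ℝ) < (j : ℝ) := by exact_mod_cast Nat.pos_of_ne_zero (by omega)
    have hj2 : (j : ℝ) ≤ (m : ℝ) := by exact_mod_cast hj.2
    have : (0 : ℝ) < ((m + 2 : ℕ) : ℝ) - (j : ℝ) := by push_cast; linarith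
    exact mul_pos hj1 this
  · intro k hk1 hk2
    have hkN : k ≤ m + 2 := by omega
    have hne : (∏ j ∈ Finset.Icc 1 k, (j : ℝ) * (((m + 2 : ℕ) : ℝ) - (j : ℝ))) ≠ 0 := by
      rw [Finset.prod_ne_zero_iff]
      intro j hj
      rw [Finset.mem_Icc] at hj
      have h1 : (j : ℝ) ≠ 0 := by exact_mod_cast (by omega : j ≠ 0)
      have h2 : (((m + 2 : ℕ) : ℝ) - (j : ℝ)) ≠ 0 := by
        have : (j : ℝ) < ((m + 2 : ℕ) : ℝ) := by exact_mod_cast (by omega : j < m + 2)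
        linarith
      exact mul_ne_zero h1 h2
    refine ⟨?_, hne⟩
    rw [leadMinor, dif_pos hkN,
      det_negC_sub (m + 2) k (Fin.castLE hkN) (Fin.castLE hkN) (fun j => rfl)
        (fun j₁ j₂ h => h),
      ← prod_fin_to_Icc (m + 2) k]
    refine Finset.prod_congr rfl fun j _ => ?_
    rw [negC_diag]
    simp [Fin.coe_castLE]
end

section
/- For every integer N ≥ 4, ∑_{k=2}^{N−2} 1/(k·(N−k)) ≥ (2/N)·log((N−2)/2) + 1/(2(N−2)). -/
open Finset

/-- `log x ≤ (x - x⁻¹)/2` for `x ≥ 1`. -/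
lemma log_le_half_sub_inv {x : ℝ} (hx : 1 ≤ x) :
    Real.log x ≤ (x - x⁻¹) / 2 := by
  rw [← Real.sinh_log (lt_of_lt_of_le one_pos hx)]
  exact Real.self_le_sinh_iff.2 (Real.log_nonneg hx)

/-- Trapezoid form: `log((k+1)/k) ≤ (1/k + 1/(k+1))/2` for real `k ≥ 1`. -/
lemma log_ratio_le {k : ℝ} (hk : 1 ≤ k) :
    Real.log ((k + 1) / k) ≤ (1 / k + 1 / (k + 1)) / 2 := by
  have hk0 : (0:ℝ) < k := lt_of_lt_of_le one_pos hk
  have hk1 : (0:ℝ) < k + 1 := by linarith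
  have h1 : (1:ℝ) ≤ (k + 1) / k := by
    rw [le_div_iff₀ hk0]; linarith
  have := log_le_half_sub_inv h1
  have hinv : ((k + 1) / k)⁻¹ = k / (k + 1) := by
    rw [inv_div]
  rw [hinv] at this
  refine this.trans (le_of_eq ?_)
  field_simp
  ring

/-- Harmonic trapezoid bound: `∑_{k=2}^{M} 1/k ≥ log M - log 2 + 1/4 + 1/(2M)` for `M ≥ 2`. -/
lemma harmonic_ge (M : ℕ) (hM : 2 ≤ M) :
    Real.log M - Real.log 2 + 1/4 + 1/(2*(M:ℝ)) ≤ ∑ k ∈ Finset.Icc 2 M, (1 : ℝ) / k := by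
  induction M with
  | zero => omega
  | succ n ih =>
    rcases Nat.lt_or_ge n 2 with h | h
    · interval_cases n
      · omega
      · norm_num
    · have hn0 : (0:ℝ) < n := by positivity
      have hn1 : (1:ℝ) ≤ n := by exact_mod_cast h.trans' (by norm_num)
      have hsum := ih h
      rw [Finset.sum_Icc_succ_top (by omega : 2 ≤ n + 1)]
      have hlog : Real.log ((n:ℝ) + 1) - Real.log n ≤ (1/(n:ℝ) + 1/((n:ℝ)+1)) / 2 := by
        have := log_ratio_le hn1
        rwa [Real.log_div (by positivity) (ne_of_gt hn0)] at this
      push_cast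
      have : Real.log ((n:ℝ)+1) - Real.log 2 + 1/4 + 1/(2*((n:ℝ)+1))
          ≤ (Real.log n - Real.log 2 + 1/4 + 1/(2*(n:ℝ))) + 1/((n:ℝ)+1) := by
        have h2 : (0:ℝ) < (n:ℝ) + 1 := by positivity
        have expand : (1/(n:ℝ) + 1/((n:ℝ)+1)) / 2 = 1/((n:ℝ)+1) + 1/(2*(n:ℝ)) - 1/(2*((n:ℝ)+1)) := by
          field_simp; ring
        nlinarith [hlog, expand]
      linarith

/-- Trapezoid-rule lower bound (appendix, proof of the approximation in Corollary 3):
`∑_{k=2}^{N-2} 1/(k(N-k)) ≥ (2/N) log((N-2)/2) + 1/(2(N-2))`. -/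
theorem sum_inv_ge_log_bound (N : ℕ) (hN : 4 ≤ N) :
    ∑ k ∈ Finset.Icc 2 (N - 2), (1 : ℝ) / ((k : ℝ) * ((N : ℝ) - (k : ℝ)))
      ≥ (2 / (N : ℝ)) * Real.log (((N : ℝ) - 2) / 2) + 1 / (2 * ((N : ℝ) - 2)) := by
  have hN0 : (0:ℝ) < N := by positivity
  have hN2 : (2:ℝ) < (N:ℝ) - 2 + 1 := by
    have : (4:ℝ) ≤ N := by exact_mod_cast hN
    linarith
  -- partial fractions
  have hpf : ∀ k ∈ Finset.Icc 2 (N-2),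
      (1 : ℝ) / ((k : ℝ) * ((N : ℝ) - (k : ℝ))) = (1/(N:ℝ)) * (1/(k:ℝ) + 1/((N:ℝ)-(k:ℝ))) := by
    intro k hk
    simp only [Finset.mem_Icc] at hk
    have hk0 : (0:ℝ) < k := by
      have : 2 ≤ k := hk.1; positivity
    have hkN : (k:ℝ) < N := by
      have : k ≤ N - 2 := hk.2
      have : (k:ℝ) ≤ (N:ℝ) - 2 := by
        have h2 : ((N - 2 : ℕ) : ℝ) = (N:ℝ) - 2 := by
          push_cast [Nat.cast_sub (by omega : 2 ≤ N)]; ring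
        calc (k:ℝ) ≤ ((N-2:ℕ):ℝ) := by exact_mod_cast hk.2
        _ = (N:ℝ) - 2 := h2
      linarith
    have hne : (N:ℝ) - (k:ℝ) ≠ 0 := ne_of_gt (sub_pos.2 hkN)
    field_simp
    ring
  rw [Finset.sum_congr rfl hpf]
  -- reflection: ∑ 1/(N-k) = ∑ 1/k over Icc 2 (N-2)
  have hrefl : ∑ k ∈ Finset.Icc 2 (N-2), (1:ℝ)/((N:ℝ)-(k:ℝ))
      = ∑ k ∈ Finset.Icc 2 (N-2), (1:ℝ)/(k:ℝ) := by
    apply Finset.sum_nbij' (fun k => N - k) (fun k => N - k)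
    · intro a ha; simp only [Finset.mem_Icc] at *; omega
    · intro a ha; simp only [Finset.mem_Icc] at *; omega
    · intro a ha; simp only [Finset.mem_Icc] at ha; omega
    · intro a ha; simp only [Finset.mem_Icc] at ha; omega
    · intro a ha
      simp only [Finset.mem_Icc] at ha
      have h1 : ((N - a : ℕ) : ℝ) = (N:ℝ) - a := by
        push_cast [Nat.cast_sub (by omega : a ≤ N)]; ring
      rw [h1]
  have h4 : (4:ℝ) ≤ (N:ℝ) := by exact_mod_cast hN
  have hsum2 : ∑ x ∈ Finset.Icc 2 (N-2), (1/(N:ℝ)) * (1/(x:ℝ) + 1/((N:ℝ)-(x:ℝ)))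
      = (2/(N:ℝ)) * ∑ k ∈ Finset.Icc 2 (N-2), (1:ℝ)/(k:ℝ) := by
    rw [← Finset.mul_sum, Finset.sum_add_distrib, hrefl]; ring
  rw [hsum2]
  have hMc : ((N-2:ℕ):ℝ) = (N:ℝ) - 2 := by
    push_cast [Nat.cast_sub (by omega : 2 ≤ N)]; ring
  have hh := harmonic_ge (N-2) (by omega)
  rw [hMc] at hh
  have hlogsplit : Real.log (((N:ℝ)-2)/2) = Real.log ((N:ℝ)-2) - Real.log 2 :=
    Real.log_div (by linarith) (by norm_num)
  have hfinal : 2/(N:ℝ) * (Real.log ((N:ℝ)-2) - Real.log 2 + 1/4 + 1/(2*((N:ℝ)-2)))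
      = 2/(N:ℝ) * Real.log (((N:ℝ)-2)/2) + 1/(2*((N:ℝ)-2)) := by
    rw [hlogsplit]
    have h1 : (N:ℝ) ≠ 0 := by positivity
    have h2 : (N:ℝ) - 2 ≠ 0 := by linarith
    field_simp
    ring
  rw [← hfinal]
  exact mul_le_mul_of_nonneg_left hh (by positivity)
end

section
/- Let N ≥ 3 be an integer. Let C be the N×N real matrix with entries C_{k,k} = −k(N−k) and C_{k+1,k} = k(N−k) for 1 ≤ k ≤ N−1 and zeros elsewhere, let R be the N×N real matrix with entries R_{k,k} = −(k−1) and R_{k−1,k} = k−1 for 2 ≤ k ≤ N and zeros elsewhere, let w ∈ ℝ^N have entries w_k = (k−1)/(N−1), and let e₁ ∈ ℝ^N be the first standard basis vector. Define, for ρ > 0, E(ρ) := 1 − wᵀ·(ρ·C + R)·(2I − ρ·C − R)⁻¹·e₁, and define the constant c_N := (1/(N−1))·(∑_{k=2}^{N−2} N/(k(N−k)) + (3N−1)/(N−1)). Then, as ρ → ∞, the matrix 2I − ρC − R is eventually invertible and E(ρ) − c_N/ρ = O(ρ⁻²), i.e. the function ρ ↦ E(ρ) − c_N·ρ⁻¹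 is big-O of ρ⁻² along the filter at infinity. -/
open Matrix Filter Asymptotics Finset

namespace GBAE

variable (N : ℕ)

noncomputable def den (i : Fin N) : ℝ := (((i : ℕ) : ℝ) + 1) * ((N : ℝ) - (((i : ℕ) : ℝ) + 1))

noncomputable def dLast : Fin N → ℝ := fun i => if (i : ℕ) = N - 1 then 1 else 0
noncomputable def ve1 : Fin N → ℝ := fun i => if (i : ℕ) = 0 then 1 else 0
noncomputable def wfun : Fin N → ℝ := fun i => ((i : ℕ) : ℝ) / ((N : ℝ) - 1)
noncomputable def vx0 : Fin N → ℝ := (1/2 : ℝ) • dLast N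

noncomputable def pSum (r : Fin N → ℝ) (i : Fin N) : ℝ :=
  ∑ j : Fin N, if (j : ℕ) ≤ (i : ℕ) then r j else 0

noncomputable def solveC (r : Fin N → ℝ) : Fin N → ℝ := fun i =>
  if (i : ℕ) = N - 1 then 0 else pSum N r i / den N i

/-- helper: sum of an indicator over `Fin N`. -/
lemma sum_indicator_val (c : Fin N → ℝ) (k : ℕ) (hk : k < N) :
    (∑ i : Fin N, if (i : ℕ) = k then c i else 0) = c ⟨k, hk⟩ := by
  rw [Finset.sum_eq_single ⟨k, hk⟩]
  · rw [if_pos rfl]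
  · intro b _ hb
    exact if_neg (fun hc => hb (Fin.ext hc))
  · exact fun h => absurd (Finset.mem_univ _) h

lemma matC_apply_split (i j : Fin N) (x : Fin N → ℝ) :
    matC N i j * x j =
      (if i = j then -(den N i) * x j else 0)
      + (if (i : ℕ) = (j : ℕ) + 1 then den N j * x j else 0) := by
  simp only [matC, Matrix.of_apply, den]
  by_cases h1 : i = j
  · have h2 : ¬ ((i : ℕ) = (j : ℕ) + 1) := by
      subst h1; omega
    subst h1
    simp [h2]
  · have h1' : ¬ ((i : ℕ) = (j : ℕ)) := fun h => h1 (Fin.ext h)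
    by_cases h2 : (i : ℕ) = (j : ℕ) + 1
    · simp [h1, h2]
    · simp [h1, h2]

lemma matC_mulVec (x : Fin N → ℝ) (i : Fin N) :
    (matC N *ᵥ x) i = -(den N i) * x i
      + ∑ j : Fin N, (if (i : ℕ) = (j : ℕ) + 1 then den N j * x j else 0) := by
  have h0 : (matC N *ᵥ x) i = ∑ j, matC N i j * x j := rfl
  rw [h0]
  calc ∑ j, matC N i j * x j
      = ∑ j : Fin N, ((if i = j then -(den N i) * x j else 0)
        + (if (i : ℕ) = (j : ℕ) + 1 then den N j * x j else 0)) := by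
        exact Finset.sum_congr rfl (fun j _ => matC_apply_split N i j x)
    _ = (∑ j : Fin N, (if i = j then -(den N i) * x j else 0))
        + ∑ j : Fin N, (if (i : ℕ) = (j : ℕ) + 1 then den N j * x j else 0) :=
        Finset.sum_add_distrib
    _ = -(den N i) * x i
        + ∑ j : Fin N, (if (i : ℕ) = (j : ℕ) + 1 then den N j * x j else 0) := by
        rw [Finset.sum_ite_eq Finset.univ i (fun j => -(den N i) * x j),
          if_pos (Finset.mem_univ i)]

lemma matC_mulVec_bot (x : Fin N → ℝ) (i : Fin N) (h : (i : ℕ) = 0) :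
    (matC N *ᵥ x) i = -(den N i) * x i := by
  rw [matC_mulVec]
  have hz : ∀ j : Fin N, (if (i : ℕ) = (j : ℕ) + 1 then den N j * x j else 0) = 0 :=
    fun j => if_neg (by omega)
  rw [Finset.sum_congr rfl (fun j _ => hz j), Finset.sum_const_zero, add_zero]

lemma matC_mulVec_succ (x : Fin N → ℝ) (j i : Fin N) (hij : (i : ℕ) = (j : ℕ) + 1) :
    (matC N *ᵥ x) i = -(den N i) * x i + den N j * x j := by
  rw [matC_mulVec]
  congr 1
  rw [Finset.sum_eq_single j]
  · rw [if_pos hij]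
  · intro b _ hb
    exact if_neg (fun hc => hb (Fin.ext (by omega)))
  · exact fun h => absurd (Finset.mem_univ _) h

lemma matR_apply_split (i j : Fin N) (x : Fin N → ℝ) :
    matR N i j * x j =
      (if i = j then -((i : ℕ) : ℝ) * x j else 0)
      + (if (j : ℕ) = (i : ℕ) + 1 then ((j : ℕ) : ℝ) * x j else 0) := by
  simp only [matR, Matrix.of_apply]
  by_cases h1 : i = j
  · have h2 : ¬ ((j : ℕ) = (i : ℕ) + 1) := by subst h1; omega
    subst h1
    simp [h2]
  · by_cases h2 : (j : ℕ) = (i : ℕ) + 1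
    · simp [h1, h2]
    · simp [h1, h2]

lemma matR_mulVec (x : Fin N → ℝ) (i : Fin N) :
    (matR N *ᵥ x) i = -((i : ℕ) : ℝ) * x i
      + ∑ j : Fin N, (if (j : ℕ) = (i : ℕ) + 1 then ((j : ℕ) : ℝ) * x j else 0) := by
  have h0 : (matR N *ᵥ x) i = ∑ j, matR N i j * x j := rfl
  rw [h0]
  calc ∑ j, matR N i j * x j
      = ∑ j : Fin N, ((if i = j then -((i : ℕ) : ℝ) * x j else 0)
        + (if (j : ℕ) = (i : ℕ) + 1 then ((j : ℕ) : ℝ) * x j else 0)) :=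
        Finset.sum_congr rfl (fun j _ => matR_apply_split N i j x)
    _ = (∑ j : Fin N, (if i = j then -((i : ℕ) : ℝ) * x j else 0))
        + ∑ j : Fin N, (if (j : ℕ) = (i : ℕ) + 1 then ((j : ℕ) : ℝ) * x j else 0) :=
        Finset.sum_add_distrib
    _ = -((i : ℕ) : ℝ) * x i
        + ∑ j : Fin N, (if (j : ℕ) = (i : ℕ) + 1 then ((j : ℕ) : ℝ) * x j else 0) := by
        rw [Finset.sum_ite_eq Finset.univ i (fun j => -((i : ℕ) : ℝ) * x j),
          if_pos (Finset.mem_univ i)]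

lemma matR_mulVec_top (x : Fin N → ℝ) (i : Fin N) (h : (i : ℕ) + 1 = N) :
    (matR N *ᵥ x) i = -((i : ℕ) : ℝ) * x i := by
  rw [matR_mulVec]
  have hz : ∀ j : Fin N, (if (j : ℕ) = (i : ℕ) + 1 then ((j : ℕ) : ℝ) * x j else 0) = 0 :=
    fun j => if_neg (by have := j.isLt; omega)
  rw [Finset.sum_congr rfl (fun j _ => hz j), Finset.sum_const_zero, add_zero]

lemma matR_mulVec_succ (x : Fin N → ℝ) (j i : Fin N) (hij : (j : ℕ) = (i : ℕ) + 1) :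
    (matR N *ᵥ x) i = -((i : ℕ) : ℝ) * x i + ((j : ℕ) : ℝ) * x j := by
  rw [matR_mulVec]
  congr 1
  rw [Finset.sum_eq_single j]
  · rw [if_pos hij]
  · intro b _ hb
    exact if_neg (fun hc => hb (Fin.ext (by omega)))
  · exact fun h => absurd (Finset.mem_univ _) h

lemma sum_matR_mulVec (x : Fin N → ℝ) : ∑ i, (matR N *ᵥ x) i = 0 := by
  have h0 : ∀ i, (matR N *ᵥ x) i = ∑ j, matR N i j * x j := fun _ => rfl
  rw [Finset.sum_congr rfl (fun i _ => h0 i), Finset.sum_comm]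
  refine Finset.sum_eq_zero fun j _ => ?_
  rw [← Finset.sum_mul]
  have hcol : (∑ i, matR N i j) = 0 := by
    have hsplit : ∀ i : Fin N, matR N i j =
        (if i = j then -((j : ℕ) : ℝ) else 0)
        + (if (j : ℕ) = (i : ℕ) + 1 then ((j : ℕ) : ℝ) else 0) := by
      intro i
      simp only [matR, Matrix.of_apply]
      by_cases h1 : i = j
      · have h2 : ¬ ((j : ℕ) = (i : ℕ) + 1) := by subst h1; omega
        subst h1; simp [h2]
      · by_cases h2 : (j : ℕ) = (i : ℕ) + 1 <;> simp [h1, h2]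
    rw [Finset.sum_congr rfl (fun i _ => hsplit i), Finset.sum_add_distrib]
    rw [Finset.sum_ite_eq' Finset.univ j (fun _ => -((j : ℕ) : ℝ)),
      if_pos (Finset.mem_univ j)]
    by_cases hj : (j : ℕ) = 0
    · have hz : ∀ i : Fin N, (if (j : ℕ) = (i : ℕ) + 1 then ((j : ℕ) : ℝ) else 0) = 0 :=
        fun i => if_neg (by omega)
      rw [Finset.sum_congr rfl (fun i _ => hz i), Finset.sum_const_zero, hj]
      simp
    · have hjlt := j.isLt
      rw [Finset.sum_eq_single (⟨(j : ℕ) - 1, by omega⟩ : Fin N)]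
      · rw [if_pos (by simp; omega)]
        ring
      · intro b _ hb
        exact if_neg (fun hc => hb (Fin.ext (by simp; omega)))
      · exact fun h => absurd (Finset.mem_univ _) h
  rw [hcol, zero_mul]

noncomputable def Bv (x : Fin N → ℝ) : Fin N → ℝ := (2 : ℝ) • x - matR N *ᵥ x
noncomputable def Bmat : Matrix (Fin N) (Fin N) ℝ :=
  (2 : ℝ) • (1 : Matrix (Fin N) (Fin N) ℝ) - matR N

lemma Bmat_mulVec (x : Fin N → ℝ) : Bmat N *ᵥ x = Bv N x := by
  unfold Bmat Bv
  rw [Matrix.sub_mulVec, Matrix.smul_mulVec, Matrix.one_mulVec]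

lemma Bv_add (x y : Fin N → ℝ) : Bv N (x + y) = Bv N x + Bv N y := by
  rw [← Bmat_mulVec, ← Bmat_mulVec, ← Bmat_mulVec, Matrix.mulVec_add]

lemma Bv_smul (c : ℝ) (x : Fin N → ℝ) : Bv N (c • x) = c • Bv N x := by
  rw [← Bmat_mulVec, ← Bmat_mulVec, Matrix.mulVec_smul]

lemma sum_Bv (x : Fin N → ℝ) : ∑ i, Bv N x i = 2 * ∑ i, x i := by
  unfold Bv
  rw [Finset.sum_congr rfl
    (fun i _ => show ((2:ℝ) • x - matR N *ᵥ x) i = 2 * x i - (matR N *ᵥ x) i from by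
      simp [Pi.sub_apply, Pi.smul_apply, smul_eq_mul]),
    Finset.sum_sub_distrib, sum_matR_mulVec, sub_zero, Finset.mul_sum]

lemma den_ne_zero (i : Fin N) (h : (i : ℕ) ≠ N - 1) : den N i ≠ 0 := by
  have hlt := i.isLt
  have h1 : (0:ℝ) < ((i : ℕ) : ℝ) + 1 := by positivity
  have h2 : (0:ℝ) < (N : ℝ) - (((i : ℕ) : ℝ) + 1) := by
    have : (i : ℕ) + 1 < N := by omega
    have := (Nat.cast_lt (α := ℝ)).mpr this
    push_cast at this
    linarith
  unfold den
  positivity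

lemma pSum_bot (r : Fin N → ℝ) (i : Fin N) (h : (i : ℕ) = 0) : pSum N r i = r i := by
  unfold pSum
  have h1 : pSum N r i = ∑ j : Fin N, if j = i then r j else 0 :=
    Finset.sum_congr rfl (fun j _ => if_congr
      (show ((j : ℕ) ≤ (i : ℕ)) ↔ j = i from by rw [Fin.ext_iff]; omega) rfl rfl)
  unfold pSum at h1
  rw [h1, Finset.sum_ite_eq' Finset.univ i r, if_pos (Finset.mem_univ i)]

lemma pSum_succ (r : Fin N → ℝ) (j i : Fin N) (hij : (i : ℕ) = (j : ℕ) + 1) :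
    pSum N r i = pSum N r j + r i := by
  unfold pSum
  have key : ∀ j' : Fin N, (if (j' : ℕ) ≤ (i : ℕ) then r j' else 0)
      = (if (j' : ℕ) ≤ (j : ℕ) then r j' else 0) + (if j' = i then r j' else 0) := by
    intro j'
    simp only [Fin.ext_iff]
    split_ifs <;> first | ring1 | (exfalso; omega)
  rw [Finset.sum_congr rfl (fun j' _ => key j'), Finset.sum_add_distrib,
    Finset.sum_ite_eq' Finset.univ i r, if_pos (Finset.mem_univ i)]

lemma pSum_last (r : Fin N → ℝ) (i : Fin N) (h : (i : ℕ) = N - 1) :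
    pSum N r i = ∑ j, r j := by
  unfold pSum
  exact Finset.sum_congr rfl (fun j _ => if_pos (by have := j.isLt; omega))

lemma matC_solveC (hN : 3 ≤ N) (r : Fin N → ℝ) (hr : ∑ j, r j = 0) :
    matC N *ᵥ solveC N r = -r := by
  funext i
  rw [Pi.neg_apply]
  by_cases h0 : (i : ℕ) = 0
  · rw [matC_mulVec_bot N _ i h0]
    have hiN : (i : ℕ) ≠ N - 1 := by omega
    have hd := den_ne_zero N i hiN
    unfold solveC
    rw [if_neg hiN, pSum_bot N r i h0]
    field_simp
  by_cases hlast : (i : ℕ) = N - 1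
  · have hjlt : N - 2 < N := by omega
    set j : Fin N := ⟨N - 2, hjlt⟩ with hj
    have hij : (i : ℕ) = (j : ℕ) + 1 := by simp [hj]; omega
    rw [matC_mulVec_succ N _ j i hij]
    have hjN : (j : ℕ) ≠ N - 1 := by simp [hj]; omega
    have hdj := den_ne_zero N j hjN
    unfold solveC
    rw [if_pos hlast, if_neg hjN, mul_zero, zero_add, mul_comm, div_mul_cancel₀ _ hdj]
    have h1 := pSum_succ N r j i hij
    have h2 := pSum_last N r i hlast
    rw [hr] at h2
    linarith
  · have hjlt : (i : ℕ) - 1 < N := by omega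
    set j : Fin N := ⟨(i : ℕ) - 1, hjlt⟩ with hj
    have hij : (i : ℕ) = (j : ℕ) + 1 := by simp [hj]; omega
    rw [matC_mulVec_succ N _ j i hij]
    have hjN : (j : ℕ) ≠ N - 1 := by simp [hj]; omega
    have hdi := den_ne_zero N i hlast
    have hdj := den_ne_zero N j hjN
    unfold solveC
    rw [if_neg hlast, if_neg hjN, pSum_succ N r j i hij]
    field_simp
    ring

lemma matC_dLast (hN : 3 ≤ N) : matC N *ᵥ dLast N = 0 := by
  funext i
  rw [Pi.zero_apply]
  by_cases h0 : (i : ℕ) = 0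
  · rw [matC_mulVec_bot N _ i h0]
    have : dLast N i = 0 := if_neg (by omega)
    rw [this, mul_zero]
  by_cases hlast : (i : ℕ) = N - 1
  · have hjlt : N - 2 < N := by omega
    set j : Fin N := ⟨N - 2, hjlt⟩ with hj
    have hij : (i : ℕ) = (j : ℕ) + 1 := by simp [hj]; omega
    rw [matC_mulVec_succ N _ j i hij]
    have hdl : dLast N j = 0 := if_neg (by simp [hj]; omega)
    have hden : den N i = 0 := by
      unfold den
      have hcast : ((i : ℕ) : ℝ) = (N : ℝ) - 1 := by
        rw [hlast]
        have : (1:ℕ) ≤ N := by omega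
        push_cast [Nat.cast_sub this]
        ring
      rw [hcast]
      ring
    rw [hdl, hden, mul_zero, add_zero, neg_zero, zero_mul]
  · have hjlt : (i : ℕ) - 1 < N := by omega
    set j : Fin N := ⟨(i : ℕ) - 1, hjlt⟩ with hj
    have hij : (i : ℕ) = (j : ℕ) + 1 := by simp [hj]; omega
    rw [matC_mulVec_succ N _ j i hij]
    have h1 : dLast N i = 0 := if_neg hlast
    have h2 : dLast N j = 0 := if_neg (by simp [hj]; omega)
    rw [h1, h2, mul_zero, mul_zero, add_zero]
lemma matC_vx0 (hN : 3 ≤ N) : matC N *ᵥ vx0 N = 0 := by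
  unfold vx0
  rw [Matrix.mulVec_smul, matC_dLast N hN, smul_zero]

noncomputable def r1 : Fin N → ℝ := ve1 N - Bv N (vx0 N)
noncomputable def vx1 : Fin N → ℝ :=
  solveC N (r1 N) + (-∑ i, solveC N (r1 N) i) • dLast N
noncomputable def r2 : Fin N → ℝ := -Bv N (vx1 N)
noncomputable def vx2 : Fin N → ℝ := solveC N (r2 N)
noncomputable def vz : Fin N → ℝ := Bv N (vx2 N)

lemma sum_dLast (hN : 3 ≤ N) : ∑ i, dLast N i = 1 := by
  unfold dLast
  rw [sum_indicator_val N (fun _ => (1:ℝ)) (N-1) (by omega)]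

lemma sum_vx0 (hN : 3 ≤ N) : ∑ i, vx0 N i = 1/2 := by
  unfold vx0
  simp only [Pi.smul_apply, smul_eq_mul]
  rw [← Finset.mul_sum, sum_dLast N hN]
  norm_num

lemma sum_ve1 (hN : 3 ≤ N) : ∑ i, ve1 N i = 1 := by
  unfold ve1
  rw [sum_indicator_val N (fun _ => (1:ℝ)) 0 (by omega)]

lemma sum_r1 (hN : 3 ≤ N) : ∑ i, r1 N i = 0 := by
  unfold r1
  rw [Finset.sum_congr rfl (fun i _ => show (ve1 N - Bv N (vx0 N)) i
    = ve1 N i - Bv N (vx0 N) i from rfl), Finset.sum_sub_distrib,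
    sum_ve1 N hN, sum_Bv, sum_vx0 N hN]
  norm_num

lemma sum_vx1 (hN : 3 ≤ N) : ∑ i, vx1 N i = 0 := by
  unfold vx1
  simp only [Pi.add_apply, Pi.smul_apply, smul_eq_mul]
  rw [Finset.sum_add_distrib, ← Finset.mul_sum, sum_dLast N hN]
  ring

lemma sum_r2 (hN : 3 ≤ N) : ∑ i, r2 N i = 0 := by
  unfold r2
  simp only [Pi.neg_apply]
  rw [Finset.sum_neg_distrib, sum_Bv, sum_vx1 N hN]
  ring

lemma matC_vx1 (hN : 3 ≤ N) : matC N *ᵥ vx1 N = -(r1 N) := by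
  unfold vx1
  rw [Matrix.mulVec_add, Matrix.mulVec_smul, matC_solveC N hN _ (sum_r1 N hN),
    matC_dLast N hN, smul_zero, add_zero]

lemma matC_vx2 (hN : 3 ≤ N) : matC N *ᵥ vx2 N = -(r2 N) :=
  matC_solveC N hN _ (sum_r2 N hN)

lemma Bv_vx0_eq (hN : 3 ≤ N) : Bv N (vx0 N) = fun i : Fin N =>
    if (i : ℕ) = N - 1 then ((N : ℝ) + 1)/2
    else if (i : ℕ) = N - 2 then -(((N : ℝ) - 1)/2) else 0 := by
  funext i
  have hvx : ∀ k : Fin N, vx0 N k = if (k : ℕ) = N - 1 then 1/2 else 0 := by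
    intro k
    unfold vx0 dLast
    by_cases h : (k : ℕ) = N - 1 <;> simp [h]
  have hBv : Bv N (vx0 N) i = 2 * vx0 N i - (matR N *ᵥ vx0 N) i := by
    unfold Bv; simp [Pi.sub_apply, Pi.smul_apply, smul_eq_mul]
  rw [hBv]
  by_cases h1 : (i : ℕ) = N - 1
  · rw [matR_mulVec_top N _ i (by omega), if_pos h1, hvx i, if_pos h1]
    have hcast : ((i : ℕ) : ℝ) = (N : ℝ) - 1 := by
      rw [h1]; push_cast [Nat.cast_sub (show (1:ℕ) ≤ N by omega)]; ring
    rw [hcast]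
    ring
  by_cases h2 : (i : ℕ) = N - 2
  · have hjlt : N - 1 < N := by omega
    set j : Fin N := ⟨N - 1, hjlt⟩ with hj
    rw [matR_mulVec_succ N _ j i (by simp [hj]; omega), if_neg h1, if_pos h2,
      hvx i, hvx j, if_neg h1, if_pos (by simp [hj])]
    have hcast : ((j : ℕ) : ℝ) = (N : ℝ) - 1 := by
      simp only [hj]
      push_cast [Nat.cast_sub (show (1:ℕ) ≤ N by omega)]
      ring
    rw [hcast]
    ring
  · have hjlt : (i : ℕ) + 1 < N := by omega
    set j : Fin N := ⟨(i : ℕ) + 1, hjlt⟩ with hj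
    rw [matR_mulVec_succ N _ j i (by simp [hj]), if_neg h1, if_neg h2,
      hvx i, hvx j, if_neg h1, if_neg (by simp [hj]; omega)]
    ring

lemma r1_eval (hN : 3 ≤ N) : r1 N = fun i : Fin N =>
    if (i : ℕ) = 0 then 1
    else if (i : ℕ) = N - 2 then ((N : ℝ) - 1)/2
    else if (i : ℕ) = N - 1 then -(((N : ℝ) + 1)/2) else 0 := by
  funext i
  unfold r1 ve1
  rw [Pi.sub_apply, Bv_vx0_eq N hN]
  beta_reduce
  split_ifs <;> first | ring1 | (exfalso; omega)

lemma pSum_r1 (hN : 3 ≤ N) (i : Fin N) : pSum N (r1 N) i =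
    if (i : ℕ) = N - 1 then 0
    else if (i : ℕ) = N - 2 then ((N : ℝ) + 1)/2 else 1 := by
  by_cases h1 : (i : ℕ) = N - 1
  · rw [pSum_last N _ i h1, sum_r1 N hN, if_pos h1]
  by_cases h2 : (i : ℕ) = N - 2
  · rw [if_neg h1, if_pos h2]
    unfold pSum
    rw [r1_eval N hN]
    have key : ∀ j : Fin N, (if (j : ℕ) ≤ (i : ℕ) then
        (if (j : ℕ) = 0 then (1:ℝ)
          else if (j : ℕ) = N - 2 then ((N : ℝ) - 1)/2
          else if (j : ℕ) = N - 1 then -(((N : ℝ) + 1)/2) else 0) else 0)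
        = (if (j : ℕ) = 0 then (1:ℝ) else 0)
          + (if (j : ℕ) = N - 2 then ((N : ℝ) - 1)/2 else 0) := by
      intro j
      have := j.isLt
      split_ifs <;> first | ring1 | (exfalso; omega)
    rw [Finset.sum_congr rfl (fun j _ => key j), Finset.sum_add_distrib,
      sum_indicator_val N (fun _ => (1:ℝ)) 0 (by omega),
      sum_indicator_val N (fun _ => ((N : ℝ) - 1)/2) (N-2) (by omega)]
    ring
  · rw [if_neg h1, if_neg h2]
    unfold pSum
    rw [r1_eval N hN]
    have key : ∀ j : Fin N, (if (j : ℕ) ≤ (i : ℕ) then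
        (if (j : ℕ) = 0 then (1:ℝ)
          else if (j : ℕ) = N - 2 then ((N : ℝ) - 1)/2
          else if (j : ℕ) = N - 1 then -(((N : ℝ) + 1)/2) else 0) else 0)
        = (if (j : ℕ) = 0 then (1:ℝ) else 0) := by
      intro j
      have hi := i.isLt
      have hj := j.isLt
      split_ifs <;> first | ring1 | (exfalso; omega)
    rw [Finset.sum_congr rfl (fun j _ => key j),
      sum_indicator_val N (fun _ => (1:ℝ)) 0 (by omega)]

lemma u_eval (hN : 3 ≤ N) : solveC N (r1 N) = fun i : Fin N =>
    if (i : ℕ) = N - 1 then 0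
    else if (i : ℕ) = N - 2 then (((N : ℝ) + 1)/2) / den N i
    else 1 / den N i := by
  funext i
  unfold solveC
  by_cases h1 : (i : ℕ) = N - 1
  · rw [if_pos h1, if_pos h1]
  by_cases h2 : (i : ℕ) = N - 2
  · rw [if_neg h1, if_neg h1, if_pos h2, pSum_r1 N hN i, if_neg h1, if_pos h2]
  · rw [if_neg h1, if_neg h1, if_neg h2, pSum_r1 N hN i, if_neg h1, if_neg h2]

noncomputable def cNval : ℝ := (1 / ((N : ℝ) - 1)) *
  ((∑ k ∈ Finset.Icc 2 (N - 2), (N : ℝ) / ((k : ℝ) * ((N : ℝ) - (k : ℝ))))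
    + (3 * (N : ℝ) - 1) / ((N : ℝ) - 1))

lemma Ncast_sub_one_ne (hN : 3 ≤ N) : (N : ℝ) - 1 ≠ 0 := by
  have : (3:ℝ) ≤ (N : ℝ) := by exact_mod_cast hN
  linarith

lemma dot_ve1 (hN : 3 ≤ N) : wfun N ⬝ᵥ ve1 N = 0 := by
  unfold dotProduct ve1
  simp only [mul_ite, mul_one, mul_zero]
  rw [sum_indicator_val N (fun i => wfun N i) 0 (by omega)]
  unfold wfun
  norm_num

lemma wfun_last (hN : 3 ≤ N) (i : Fin N) (h : (i : ℕ) = N - 1) : wfun N i = 1 := by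
  unfold wfun
  rw [h]
  push_cast [Nat.cast_sub (show (1:ℕ) ≤ N by omega)]
  rw [div_self (Ncast_sub_one_ne N hN)]

lemma dot_dLast (hN : 3 ≤ N) : wfun N ⬝ᵥ dLast N = 1 := by
  unfold dotProduct dLast
  simp only [mul_ite, mul_one, mul_zero]
  rw [sum_indicator_val N (fun i => wfun N i) (N-1) (by omega)]
  exact wfun_last N hN _ rfl

lemma dot_vx0 (hN : 3 ≤ N) : wfun N ⬝ᵥ vx0 N = 1/2 := by
  unfold vx0
  rw [dotProduct_smul, dot_dLast N hN, smul_eq_mul]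
  norm_num

/-- `Sfin` is the harmonic-type sum appearing in the expansion. -/
noncomputable def Sfin : ℝ := ∑ i : Fin N, if (i : ℕ) ≤ N - 3 then 1/(((i : ℕ) : ℝ)+1) else 0

lemma Sfin_eq (hN : 3 ≤ N) : Sfin N = ∑ k ∈ Finset.Icc 1 (N-2), 1/(k : ℝ) := by
  unfold Sfin
  rw [Fin.sum_univ_eq_sum_range (fun k => if k ≤ N - 3 then 1/((k : ℝ)+1) else 0) N]
  rw [← Finset.sum_filter]
  have hfil : (Finset.range N).filter (fun k => k ≤ N - 3) = Finset.range (N-2) := by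
    ext a
    simp only [Finset.mem_filter, Finset.mem_range]
    omega
  rw [hfil]
  refine Finset.sum_nbij' (fun k => k + 1) (fun k => k - 1) ?_ ?_ ?_ ?_ ?_
  · intro a ha
    simp only [Finset.mem_range] at ha
    simp only [Finset.mem_Icc]
    omega
  · intro a ha
    simp only [Finset.mem_Icc] at ha
    simp only [Finset.mem_range]
    omega
  · intro a _; beta_reduce; omega
  · intro a ha
    simp only [Finset.mem_Icc] at ha
    beta_reduce; omega
  · intro a _
    push_cast
    ring

lemma SIcc (hN : 3 ≤ N) :
    ∑ k ∈ Finset.Icc 2 (N - 2), (N : ℝ) / ((k : ℝ) * ((N : ℝ) - (k : ℝ)))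
      = 2 * (∑ k ∈ Finset.Icc 1 (N-2), 1/(k : ℝ)) - 2 := by
  have hsplit : ∀ k ∈ Finset.Icc 2 (N-2),
      (N : ℝ) / ((k : ℝ) * ((N : ℝ) - (k : ℝ))) = 1/(k : ℝ) + 1/((N : ℝ) - (k : ℝ)) := by
    intro k hk
    rw [Finset.mem_Icc] at hk
    have hk0 : (k : ℝ) ≠ 0 := by
      have : (0:ℕ) < k := by omega
      exact_mod_cast Nat.pos_iff_ne_zero.mp this
    have hkN : (N : ℝ) - (k : ℝ) ≠ 0 := by
      have : k < N := by omega
      have : (k : ℝ) < (N : ℝ) := by exact_mod_cast this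
      linarith
    field_simp
    ring
  rw [Finset.sum_congr rfl hsplit, Finset.sum_add_distrib]
  have h2 : ∑ k ∈ Finset.Icc 2 (N-2), 1/((N : ℝ) - (k : ℝ))
      = ∑ k ∈ Finset.Icc 2 (N-2), 1/(k : ℝ) := by
    refine Finset.sum_nbij' (fun k => N - k) (fun k => N - k) ?_ ?_ ?_ ?_ ?_
    · intro a ha; simp only [Finset.mem_Icc] at *; omega
    · intro a ha; simp only [Finset.mem_Icc] at *; omega
    · intro a ha; simp only [Finset.mem_Icc] at ha; beta_reduce; omega
    · intro a ha; simp only [Finset.mem_Icc] at ha; beta_reduce; omega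
    · intro a ha
      simp only [Finset.mem_Icc] at ha
      rw [Nat.cast_sub (show a ≤ N by omega)]
  have h1 : ∑ k ∈ Finset.Icc 1 (N-2), 1/(k : ℝ)
      = 1 + ∑ k ∈ Finset.Icc 2 (N-2), 1/(k : ℝ) := by
    rw [show Finset.Icc 1 (N-2) = insert 1 (Finset.Icc 2 (N-2)) from by
      ext a; simp only [Finset.mem_insert, Finset.mem_Icc]; omega,
      Finset.sum_insert (by simp)]
    norm_num
  rw [h2, h1]
  ring

lemma dot_vx1 (hN : 3 ≤ N) : wfun N ⬝ᵥ vx1 N = -(cNval N)/2 := by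
  classical
  set u := solveC N (r1 N) with hu
  set S := ∑ i, u i with hS
  have step1 : wfun N ⬝ᵥ vx1 N = (∑ i, wfun N i * u i) - S := by
    unfold vx1
    rw [dotProduct_add, dotProduct_smul, dot_dLast N hN, smul_eq_mul, mul_one]
    rfl
  have step1' : (∑ i, wfun N i * u i) - S = ∑ i, (wfun N i - 1) * u i := by
    rw [hS, ← Finset.sum_sub_distrib]
    exact Finset.sum_congr rfl (fun i _ => by ring)
  have upt : ∀ i : Fin N, (wfun N i - 1) * u i =
      -(1/((N : ℝ)-1)) * ((if (i : ℕ) ≤ N - 3 then 1/(((i : ℕ) : ℝ)+1) else 0)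
        + (if (i : ℕ) = N - 2 then ((N : ℝ)+1)/(2*((N : ℝ)-1)) else 0)) := by
    intro i
    have hN1 := Ncast_sub_one_ne N hN
    rw [hu, u_eval N hN]
    beta_reduce
    by_cases h1 : (i : ℕ) = N - 1
    · rw [if_pos h1, if_neg (by omega), if_neg (by omega)]
      ring
    by_cases h2 : (i : ℕ) = N - 2
    · rw [if_neg h1, if_pos h2, if_neg (by omega), if_pos h2]
      have hcast : ((i : ℕ) : ℝ) = (N : ℝ) - 2 := by
        rw [h2]; push_cast [Nat.cast_sub (show (2:ℕ) ≤ N by omega)]; ring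
      unfold wfun den
      rw [hcast]
      have hx : ((N:ℝ) - 2 + 1) * ((N:ℝ) - ((N:ℝ) - 2 + 1)) = (N:ℝ) - 1 := by ring
      rw [hx]
      field_simp
      ring
    · have hle : (i : ℕ) ≤ N - 3 := by have := i.isLt; omega
      rw [if_neg h1, if_neg h2, if_pos hle, if_neg h2]
      unfold wfun den
      have hi1 : (((i : ℕ) : ℝ) + 1) ≠ 0 := by positivity
      have hiN : (N : ℝ) - (((i : ℕ) : ℝ) + 1) ≠ 0 := by
        have : (i : ℕ) + 1 < N := by omega
        have : (((i : ℕ) : ℝ) + 1) < (N : ℝ) := by exact_mod_cast this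
        linarith
      field_simp
      ring
  have step2 : ∑ i, (wfun N i - 1) * u i
      = -(1/((N : ℝ)-1)) * (Sfin N + ((N : ℝ)+1)/(2*((N : ℝ)-1))) := by
    rw [Finset.sum_congr rfl (fun i _ => upt i), ← Finset.mul_sum, Finset.sum_add_distrib]
    unfold Sfin
    rw [sum_indicator_val N (fun _ => ((N : ℝ)+1)/(2*((N : ℝ)-1))) (N-2) (by omega)]
  rw [step1, step1', step2, Sfin_eq N hN]
  unfold cNval
  rw [SIcc N hN]
  have hN1 := Ncast_sub_one_ne N hN
  field_simp
  ring

noncomputable def rG (j : Fin N) : Fin N → ℝ :=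
  fun i => (if i = j then 1 else 0) - Bv N (vx0 N) i

noncomputable def G0 : Matrix (Fin N) (Fin N) ℝ := Matrix.of fun i _ => vx0 N i
noncomputable def G1 : Matrix (Fin N) (Fin N) ℝ := Matrix.of fun i j => solveC N (rG N j) i
noncomputable def Gm (ρ : ℝ) : Matrix (Fin N) (Fin N) ℝ := G0 N + ρ⁻¹ • G1 N
noncomputable def Kmat : Matrix (Fin N) (Fin N) ℝ := Bmat N * G1 N
noncomputable def Um (ρ : ℝ) : Matrix (Fin N) (Fin N) ℝ := 1 + ρ⁻¹ • Kmat N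
noncomputable def Mm (ρ : ℝ) : Matrix (Fin N) (Fin N) ℝ :=
  (2 : ℝ) • (1 : Matrix (Fin N) (Fin N) ℝ) - ρ • matC N - matR N

lemma sum_rG (hN : 3 ≤ N) (j : Fin N) : ∑ i, rG N j i = 0 := by
  unfold rG
  rw [Finset.sum_sub_distrib, sum_Bv, sum_vx0 N hN,
    Finset.sum_ite_eq' Finset.univ j (fun _ => (1:ℝ)), if_pos (Finset.mem_univ j)]
  norm_num

lemma mul_col (A B : Matrix (Fin N) (Fin N) ℝ) (i j : Fin N) :
    (A * B) i j = (A *ᵥ (fun k => B k j)) i := by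
  simp [Matrix.mul_apply, Matrix.mulVec, dotProduct]

lemma matC_G0 (hN : 3 ≤ N) : matC N * G0 N = 0 := by
  ext i j
  rw [mul_col]
  have hc : (fun k => G0 N k j) = vx0 N := rfl
  rw [hc, matC_vx0 N hN]
  rfl

lemma matC_G1 (hN : 3 ≤ N) : matC N * G1 N = Bmat N * G0 N - 1 := by
  ext i j
  rw [Matrix.sub_apply, mul_col, mul_col]
  have hc : (fun k => G1 N k j) = solveC N (rG N j) := rfl
  have hc0 : (fun k => G0 N k j) = vx0 N := rfl
  rw [hc, hc0, matC_solveC N hN _ (sum_rG N hN j), Bmat_mulVec]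
  unfold rG
  rw [Pi.neg_apply, Matrix.one_apply]
  ring

lemma M_mul_G (hN : 3 ≤ N) (ρ : ℝ) (hρ : ρ ≠ 0) : Mm N ρ * Gm N ρ = Um N ρ := by
  have hM : Mm N ρ = Bmat N - ρ • matC N := by
    unfold Mm Bmat
    abel
  unfold Gm Um Kmat
  rw [hM, Matrix.sub_mul, Matrix.mul_add, Matrix.mul_add, Matrix.mul_smul,
    Matrix.mul_smul, Matrix.smul_mul, Matrix.smul_mul, matC_G0 N hN, matC_G1 N hN,
    smul_zero, smul_smul, inv_mul_cancel₀ hρ, one_smul]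
  abel

lemma tendsto_Gm : Tendsto (fun ρ : ℝ => Gm N ρ) atTop (nhds (G0 N)) := by
  have h1 : Tendsto (fun ρ : ℝ => ρ⁻¹ • G1 N) atTop (nhds ((0:ℝ) • G1 N)) :=
    tendsto_inv_atTop_zero.smul_const (G1 N)
  rw [zero_smul] at h1
  have := tendsto_const_nhds (x := G0 N) (f := atTop (α := ℝ)) |>.add h1
  rw [add_zero] at this
  exact this

lemma tendsto_Um : Tendsto (fun ρ : ℝ => Um N ρ) atTop (nhds 1) := by
  have h1 : Tendsto (fun ρ : ℝ => ρ⁻¹ • Kmat N) atTop (nhds ((0:ℝ) • Kmat N)) :=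
    tendsto_inv_atTop_zero.smul_const (Kmat N)
  rw [zero_smul] at h1
  have := tendsto_const_nhds (x := (1 : Matrix (Fin N) (Fin N) ℝ)) (f := atTop (α := ℝ)) |>.add h1
  rw [add_zero] at this
  exact this

lemma tendsto_detUm : Tendsto (fun ρ : ℝ => (Um N ρ).det) atTop (nhds 1) := by
  have hc : Continuous fun A : Matrix (Fin N) (Fin N) ℝ => A.det := continuous_id.matrix_det
  have := (hc.tendsto (1 : Matrix (Fin N) (Fin N) ℝ)).comp (tendsto_Um N)
  rwa [Matrix.det_one] at this

lemma tendsto_Wm : Tendsto (fun ρ : ℝ => (Um N ρ)⁻¹) atTop (nhds 1) := by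
  have hadj : Tendsto (fun ρ : ℝ => (Um N ρ).adjugate) atTop
      (nhds ((1 : Matrix (Fin N) (Fin N) ℝ).adjugate)) := by
    have hc : Continuous fun A : Matrix (Fin N) (Fin N) ℝ => A.adjugate :=
      continuous_id.matrix_adjugate
    exact (hc.tendsto _).comp (tendsto_Um N)
  rw [Matrix.adjugate_one] at hadj
  have hdet : Tendsto (fun ρ : ℝ => ((Um N ρ).det)⁻¹) atTop (nhds 1) := by
    have := (tendsto_detUm N).inv₀ one_ne_zero
    rwa [inv_one] at this
  have hsmul := hdet.smul hadj
  rw [one_smul] at hsmul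
  have hinv : ∀ ρ : ℝ, (Um N ρ)⁻¹ = ((Um N ρ).det)⁻¹ • (Um N ρ).adjugate := by
    intro ρ
    rw [Matrix.inv_def, Ring.inverse_eq_inv]
  simpa only [hinv] using hsmul

lemma Mm_inv (hN : 3 ≤ N) (ρ : ℝ) (hρ : ρ ≠ 0) (hdet : (Um N ρ).det ≠ 0) :
    IsUnit (Mm N ρ) ∧ (Mm N ρ)⁻¹ = Gm N ρ * (Um N ρ)⁻¹ := by
  have hMG := M_mul_G N hN ρ hρ
  have hUdet : IsUnit (Um N ρ).det := isUnit_iff_ne_zero.mpr hdet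
  have hright : Mm N ρ * (Gm N ρ * (Um N ρ)⁻¹) = 1 := by
    rw [← Matrix.mul_assoc, hMG, Matrix.mul_nonsing_inv _ hUdet]
  have hMdet : IsUnit (Mm N ρ).det := by
    have := congrArg Matrix.det hright
    rw [Matrix.det_mul, Matrix.det_one] at this
    exact IsUnit.of_mul_eq_one _ this
  exact ⟨(Matrix.isUnit_iff_isUnit_det _).mpr hMdet, Matrix.inv_eq_right_inv hright⟩

lemma key_identity (hN : 3 ≤ N) (ρ : ℝ) (hρ : ρ ≠ 0) (hdet : (Um N ρ).det ≠ 0) :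
    (1 - wfun N ⬝ᵥ ((ρ • matC N + matR N) *ᵥ ((Mm N ρ)⁻¹ *ᵥ ve1 N))) - cNval N / ρ
      = ρ⁻¹ ^ 2 * (2 * (wfun N ⬝ᵥ ((Gm N ρ * (Um N ρ)⁻¹) *ᵥ vz N) - wfun N ⬝ᵥ vx2 N)) := by
  obtain ⟨hMunit, hMinv⟩ := Mm_inv N hN ρ hρ hdet
  have hMdet : IsUnit (Mm N ρ).det := (Matrix.isUnit_iff_isUnit_det _).mp hMunit
  set x : Fin N → ℝ := (Mm N ρ)⁻¹ *ᵥ ve1 N with hx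
  have hMx : Mm N ρ *ᵥ x = ve1 N := by
    rw [hx, Matrix.mulVec_mulVec, Matrix.mul_nonsing_inv _ hMdet, Matrix.one_mulVec]
  -- Step A : E = 1 - 2 (w ⬝ x)
  have hstepA : wfun N ⬝ᵥ ((ρ • matC N + matR N) *ᵥ x) = 2 * (wfun N ⬝ᵥ x) := by
    have hmat : ρ • matC N + matR N
        = (2 : ℝ) • (1 : Matrix (Fin N) (Fin N) ℝ) - Mm N ρ := by
      unfold Mm; abel
    rw [hmat, Matrix.sub_mulVec, Matrix.smul_mulVec, Matrix.one_mulVec, hMx,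
      dotProduct_sub, dotProduct_smul, dot_ve1 N hN, smul_eq_mul]
    ring
  -- Step B : M y = e1 + ρ⁻²  z
  set y : Fin N → ℝ := vx0 N + ρ⁻¹ • vx1 N + (ρ⁻¹ ^ 2) • vx2 N with hy
  have hMv : ∀ v : Fin N → ℝ, Mm N ρ *ᵥ v = Bv N v - ρ • (matC N *ᵥ v) := by
    intro v
    have : Mm N ρ = Bmat N - ρ • matC N := by unfold Mm Bmat; abel
    rw [this, Matrix.sub_mulVec, Bmat_mulVec, Matrix.smul_mulVec]
  have hMy : Mm N ρ *ᵥ y = ve1 N + (ρ⁻¹ ^ 2) • vz N := by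
    rw [hMv, hy]
    rw [Bv_add, Bv_add, Bv_smul, Bv_smul]
    rw [Matrix.mulVec_add, Matrix.mulVec_add, Matrix.mulVec_smul, Matrix.mulVec_smul,
      matC_vx0 N hN, matC_vx1 N hN, matC_vx2 N hN]
    have hr1 : Bv N (vx0 N) = ve1 N - r1 N := by unfold r1; abel
    have hr2 : Bv N (vx1 N) = -(r2 N) := by unfold r2; abel
    have hvz : Bv N (vx2 N) = vz N := rfl
    rw [hr1, hr2, hvz]
    match_scalars <;> first | ring1 | (field_simp; try ring1)
  -- Step C : y - x = ρ⁻² M⁻¹ z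
  have hstepC : y - x = (ρ⁻¹ ^ 2) • ((Mm N ρ)⁻¹ *ᵥ vz N) := by
    have h5 : Mm N ρ *ᵥ (y - x) = (ρ⁻¹ ^ 2) • vz N := by
      rw [Matrix.mulVec_sub, hMy, hMx, add_sub_cancel_left]
    have h6 : (Mm N ρ)⁻¹ *ᵥ (Mm N ρ *ᵥ (y - x)) = y - x := by
      rw [Matrix.mulVec_mulVec, Matrix.nonsing_inv_mul _ hMdet, Matrix.one_mulVec]
    rw [← h6, h5, Matrix.mulVec_smul]
  -- dot products
  have hdoty : wfun N ⬝ᵥ y = 1/2 + ρ⁻¹ * (-(cNval N)/2) + ρ⁻¹ ^ 2 * (wfun N ⬝ᵥ vx2 N) := by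
    rw [hy, dotProduct_add, dotProduct_add, dotProduct_smul, dotProduct_smul,
      dot_vx0 N hN, dot_vx1 N hN, smul_eq_mul, smul_eq_mul]
  have hdotx : wfun N ⬝ᵥ x
      = wfun N ⬝ᵥ y - ρ⁻¹ ^ 2 * (wfun N ⬝ᵥ ((Mm N ρ)⁻¹ *ᵥ vz N)) := by
    have : x = y - (ρ⁻¹ ^ 2) • ((Mm N ρ)⁻¹ *ᵥ vz N) := by
      rw [← hstepC]; abel
    rw [this, dotProduct_sub, dotProduct_smul, smul_eq_mul]
  rw [hstepA, hdotx, hdoty, ← hMinv]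
  have hcN : cNval N / ρ = cNval N * ρ⁻¹ := by rw [div_eq_mul_inv]
  rw [hcN]
  ring
end GBAE

/-- Proposition 8 of the appendix: the asymptotic Gossip bound
`E(ρ) = 1 - wᵀ (ρC + R) (2I - ρC - R)⁻¹ e₁` satisfies
`E(ρ) = c_N/ρ + O(ρ⁻²)` as `ρ → ∞`, where
`c_N = (1/(N-1)) (∑_{k=2}^{N-2} N/(k(N-k)) + (3N-1)/(N-1))`;
moreover `2I - ρC - R` is eventually invertible. -/
theorem gossip_bound_asymptotic_expansion
    (N : ℕ) (hN : 3 ≤ N)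
    (w e1 : Fin N → ℝ)
    (hw : ∀ k : Fin N, w k = ((k : ℕ) : ℝ) / ((N : ℝ) - 1))
    (he1 : ∀ j : Fin N, e1 j = if (j : ℕ) = 0 then 1 else 0)
    (E : ℝ → ℝ)
    (hE : ∀ ρ : ℝ, E ρ = 1 - w ⬝ᵥ ((ρ • matC N + matR N) *ᵥ
      (((2 : ℝ) • (1 : Matrix (Fin N) (Fin N) ℝ) - ρ • matC N - matR N)⁻¹ *ᵥ e1)))
    (cN : ℝ)
    (hcN : cN = (1 / ((N : ℝ) - 1)) *
      ((∑ k ∈ Finset.Icc 2 (N - 2), (N : ℝ) / ((k : ℝ) * ((N : ℝ) - (k : ℝ))))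
        + (3 * (N : ℝ) - 1) / ((N : ℝ) - 1))) :
    (∀ᶠ ρ : ℝ in atTop,
        IsUnit ((2 : ℝ) • (1 : Matrix (Fin N) (Fin N) ℝ) - ρ • matC N - matR N))
      ∧ (fun ρ : ℝ => E ρ - cN / ρ) =O[atTop] fun ρ : ℝ => ρ⁻¹ ^ 2 := by

  have hw' : w = GBAE.wfun N := funext hw
  have he' : e1 = GBAE.ve1 N := funext he1
  have hev : ∀ᶠ ρ : ℝ in atTop, (GBAE.Um N ρ).det ≠ 0 ∧ ρ ≠ 0 :=
    ((GBAE.tendsto_detUm N).eventually_ne one_ne_zero).and (eventually_ne_atTop (0:ℝ))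
  constructor
  · exact hev.mono fun ρ ⟨hdet, hρ⟩ => (GBAE.Mm_inv N hN ρ hρ hdet).1
  · have hcont : Continuous fun p : Matrix (Fin N) (Fin N) ℝ × Matrix (Fin N) (Fin N) ℝ =>
        GBAE.wfun N ⬝ᵥ ((p.1 * p.2) *ᵥ GBAE.vz N) :=
      continuous_const.dotProduct
        ((continuous_fst.matrix_mul continuous_snd).matrix_mulVec continuous_const)
    have htend : Tendsto (fun ρ : ℝ => (GBAE.Gm N ρ, (GBAE.Um N ρ)⁻¹)) atTop
        (nhds (GBAE.G0 N, (1 : Matrix (Fin N) (Fin N) ℝ))) :=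
      (GBAE.tendsto_Gm N).prodMk_nhds (GBAE.tendsto_Wm N)
    have hf : Tendsto
        (fun ρ : ℝ => GBAE.wfun N ⬝ᵥ ((GBAE.Gm N ρ * (GBAE.Um N ρ)⁻¹) *ᵥ GBAE.vz N)) atTop
        (nhds (GBAE.wfun N ⬝ᵥ ((GBAE.G0 N * 1) *ᵥ GBAE.vz N))) := by
      have := (hcont.tendsto (GBAE.G0 N, (1 : Matrix (Fin N) (Fin N) ℝ))).comp htend
      simpa [Function.comp_def] using this
    have hg : Tendsto (fun ρ : ℝ =>
        2 * ((GBAE.wfun N ⬝ᵥ ((GBAE.Gm N ρ * (GBAE.Um N ρ)⁻¹) *ᵥ GBAE.vz N))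
          - GBAE.wfun N ⬝ᵥ GBAE.vx2 N)) atTop
        (nhds (2 * ((GBAE.wfun N ⬝ᵥ ((GBAE.G0 N * 1) *ᵥ GBAE.vz N))
          - GBAE.wfun N ⬝ᵥ GBAE.vx2 N))) :=
      (hf.sub_const _).const_mul 2
    have hO1 := hg.isBigO_one (F := ℝ)
    have h2 : (fun ρ : ℝ => ρ⁻¹ ^ 2 *
        (2 * ((GBAE.wfun N ⬝ᵥ ((GBAE.Gm N ρ * (GBAE.Um N ρ)⁻¹) *ᵥ GBAE.vz N))
          - GBAE.wfun N ⬝ᵥ GBAE.vx2 N))) =O[atTop] (fun ρ : ℝ => ρ⁻¹ ^ 2) := by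
      simpa only [mul_one] using (isBigO_refl (fun ρ : ℝ => ρ⁻¹ ^ 2) atTop).mul hO1
    have heq : (fun ρ : ℝ => E ρ - cN / ρ) =ᶠ[atTop] (fun ρ : ℝ => ρ⁻¹ ^ 2 *
        (2 * ((GBAE.wfun N ⬝ᵥ ((GBAE.Gm N ρ * (GBAE.Um N ρ)⁻¹) *ᵥ GBAE.vz N))
          - GBAE.wfun N ⬝ᵥ GBAE.vx2 N))) := by
      filter_upwards [hev] with ρ hρev
      obtain ⟨hdet, hρ⟩ := hρev
      rw [hE ρ, hw', he', hcN]
      exact GBAE.key_identity N hN ρ hρ hdet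
    exact h2.congr' heq.symm (Filter.EventuallyEq.refl _ _)
end
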